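/- arXiv:1212.5960 — 4 statements merged into one kernel-verified Lean document; each statement's English description precedes it below -/
import Mathlib

section
/- Let G be a factorizable graph, X an odd-maximal barrier of G with odd components K_1, …, K_l of G − X (l = |X|), M a perfect matching of G, and M' = M ∩ δ(X) the corresponding perfect matching of H_X(G). Let u, v ∈ X, let K be an odd component of G − X with w ∈ V(K), and let w_K be the contracted vertex of H_X(G) corresponding to K. Then for any M-balanced path P of G from u to v, the path P' = P/K_1/⋯/K_l obtained from P by contracting each K_i is an M'-balanced path of H_X(G) from u to v; and for any M-saturated path P of G between u and w, the contracted path P' is an M'-saturated path of H_X(G) between u and w_K. -/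
open SimpleGraph

section Defs

variable {V : Type*} {W : Type*}

/-- A graph is factorizable if it has a perfect matching. -/
def Factorizable (G : SimpleGraph V) : Prop :=
  ∃ M : SimpleGraph.Subgraph G, M.IsPerfectMatching

/-- An edge is allowed if some perfect matching contains it. -/
def Allowed (G : SimpleGraph V) (e : Sym2 V) : Prop :=
  ∃ M : SimpleGraph.Subgraph G, M.IsPerfectMatching ∧ e ∈ M.edgeSet

/-- The spanning subgraph formed by the allowed edges. -/
def allowedSubgraph (G : SimpleGraph V) : SimpleGraph V :=
  SimpleGraph.fromEdgeSet {e | e ∈ G.edgeSet ∧ Allowed G e}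

/-- `u` and `v` lie in the same factor-component of `G`. -/
def SameFC (G : SimpleGraph V) (u v : V) : Prop :=
  (allowedSubgraph G).Reachable u v

/-- `C` is the vertex set of a factor-component of `G`. -/
def IsFactorComponent (G : SimpleGraph V) (C : Set V) : Prop :=
  ∃ v : V, C = {w | SameFC G v w}

/-- Edges alternate along a list: the `i`-th edge lies in `F` iff `i` is even. -/
def IsAltList (F : Set (Sym2 V)) (l : List (Sym2 V)) : Prop :=
  ∀ (i : ℕ) (h : i < l.length), (l.get ⟨i, h⟩ ∈ F ↔ Even i)

/-- An `M`-saturated path: odd length, `M ∩ E(P)` a perfect matching of `P`. -/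
def IsSaturatedPath {G : SimpleGraph V} (F : Set (Sym2 V)) {u v : V}
    (p : G.Walk u v) : Prop :=
  p.IsPath ∧ Odd p.length ∧ IsAltList F p.edges

/-- An `M`-balanced path from `u` to `v`: even length, `M ∩ E(P)` a near-perfect
matching of `P` exposing only `v`. -/
def IsBalancedPath {G : SimpleGraph V} (F : Set (Sym2 V)) {u v : V}
    (p : G.Walk u v) : Prop :=
  p.IsPath ∧ Even p.length ∧ IsAltList F p.edges

/-- The number of odd components of `G - X`. -/
noncomputable def qG (G : SimpleGraph V) (X : Set V) : ℕ :=
  {c : (G.induce Xᶜ).ConnectedComponent | Odd c.supp.ncard}.ncard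

/-- The set of vertices contained in odd components of `G - X`. -/
def DX (G : SimpleGraph V) (X : Set V) : Set V :=
  {v | ∃ h : v ∈ Xᶜ, Odd ((G.induce Xᶜ).connectedComponentMk ⟨v, h⟩).supp.ncard}

/-- The set of vertices contained in even components of `G - X`. -/
def CX (G : SimpleGraph V) (X : Set V) : Set V := (X ∪ DX G X)ᶜ

/-- A barrier of a factorizable graph: `q_G(X) = |X|`. -/
def IsBarrier (G : SimpleGraph V) (X : Set V) : Prop := qG G X = X.ncard

/-- An odd-maximal barrier: no nonempty `Y ⊆ D_X` with `X ∪ Y` a barrier. -/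
def IsOddMaximalBarrier (G : SimpleGraph V) (X : Set V) : Prop :=
  IsBarrier G X ∧ ∀ Y ⊆ DX G X, Y.Nonempty → ¬ IsBarrier G (X ∪ Y)

/-- Kita's equivalence relation `u ∼_G v`. -/
def simG (G : SimpleGraph V) (u v : V) : Prop :=
  SameFC G u v ∧ (u = v ∨ ¬ Factorizable (G.induce {w : V | w ≠ u ∧ w ≠ v}))

/-- `S` is a class of the generalized canonical partition `P(G)`. -/
def IsCanonicalClass (G : SimpleGraph V) (S : Set V) : Prop :=
  ∃ v : V, S = {u | simG G u v}

/-- `S` is a member of `P_G(H)` where `C = V(H)`. -/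
def IsClassOf (G : SimpleGraph V) (C S : Set V) : Prop :=
  IsCanonicalClass G S ∧ S ⊆ C

/-- A separating set meets each factor-component fully or not at all. -/
def IsSeparating (G : SimpleGraph V) (X : Set V) : Prop :=
  ∀ C : Set V, IsFactorComponent G C → C ⊆ X ∨ Disjoint C X

/-- Factor-critical: deleting any vertex leaves a factorizable (or empty) graph. -/
def FactorCritical (H : SimpleGraph W) : Prop :=
  ∀ v : W, Factorizable (H.induce {w : W | w ≠ v})

/-- The graph `G[X]/C`: induced on `X`, with `C` contracted to a single
vertex (`none`). -/
def contractSet (G : SimpleGraph V) (X C : Set V) :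
    SimpleGraph (Option {x : V // x ∈ X \ C}) :=
  SimpleGraph.fromRel (fun a b =>
    match a, b with
    | some x, some y => G.Adj x.1 y.1
    | some x, none => ∃ c ∈ C ∩ X, G.Adj x.1 c
    | none, _ => False)

/-- `X` is a critical-inducing set for the factor-component `C1` to `C2`. -/
def CriticalInducing (G : SimpleGraph V) (C1 C2 X : Set V) : Prop :=
  IsSeparating G X ∧ C1 ∪ C2 ⊆ X ∧ FactorCritical (contractSet G X C1)

/-- Kita's partial order `C1 ◁ C2` on factor-components. -/
def compOrder (G : SimpleGraph V) (C1 C2 : Set V) : Prop :=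
  ∃ X : Set V, CriticalInducing G C1 C2 X

/-- `V↑*(H)`: union of the vertex sets of all factor-components above `C`. -/
def upStar (G : SimpleGraph V) (C : Set V) : Set V :=
  {v | ∃ C' : Set V, IsFactorComponent G C' ∧ compOrder G C C' ∧ v ∈ C'}

/-- `K` is (the vertex set of) a connected component of `G[U]`. -/
def IsComponentOf (G : SimpleGraph V) (U K : Set V) : Prop :=
  ∃ (v : V) (hv : v ∈ U),
    K = {w | ∃ hw : w ∈ U, (G.induce U).Reachable ⟨v, hv⟩ ⟨w, hw⟩}

/-- `V↑(S)` for a class `S ∈ P_G(H)` where `C = V(H)`. -/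
def upOfClass (G : SimpleGraph V) (C S : Set V) : Set V :=
  {v | ∃ C' : Set V, IsFactorComponent G C' ∧ C' ≠ C ∧ compOrder G C C' ∧ v ∈ C' ∧
    ∃ K : Set V, IsComponentOf G (upStar G C \ C) K ∧ C' ⊆ K ∧
      ∀ w ∈ C, (∃ k ∈ K, G.Adj k w) → w ∈ S}

/-- `V↑*(S) = V↑(S) ∪ S`. -/
def upStarOfClass (G : SimpleGraph V) (C S : Set V) : Set V := upOfClass G C S ∪ S

/-- The odd components of `G - X`, as a type. -/
abbrev OddCompT (G : SimpleGraph V) (X : Set V) :=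
  {c : (G.induce Xᶜ).ConnectedComponent // Odd c.supp.ncard}

/-- Vertices of `H_X(G)`: vertices of `X` together with contracted odd components. -/
abbrev HVert (G : SimpleGraph V) (X : Set V) := {x : V // x ∈ X} ⊕ OddCompT G X

/-- The bipartite graph `H_X(G)`. -/
def HGraph (G : SimpleGraph V) (X : Set V) : SimpleGraph (HVert G X) :=
  SimpleGraph.fromRel (fun a b =>
    ∃ (x : {x : V // x ∈ X}) (c : OddCompT G X) (y : (Xᶜ : Set V)),
      a = Sum.inl x ∧ b = Sum.inr c ∧
      (G.induce Xᶜ).connectedComponentMk y = c.1 ∧ G.Adj x.1 y.1)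

/-- The edge set of `H_X(G)` corresponding to `M ∩ δ(X)`. -/
def projEdges (G : SimpleGraph V) (X : Set V) (M : SimpleGraph.Subgraph G) :
    Set (Sym2 (HVert G X)) :=
  {e | ∃ (x : {x : V // x ∈ X}) (c : OddCompT G X) (y : (Xᶜ : Set V)),
    (G.induce Xᶜ).connectedComponentMk y = c.1 ∧ s(x.1, y.1) ∈ M.edgeSet ∧
    e = s(Sum.inl x, Sum.inr c)}

/-- The projection of a vertex of `G` to `H_X(G)` (`none` on `C_X`). -/
noncomputable def projV (G : SimpleGraph V) (X : Set V) (v : V) :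
    Option (HVert G X) := by
  classical
  exact if h : v ∈ X then some (Sum.inl ⟨v, h⟩)
  else if ho : Odd ((G.induce Xᶜ).connectedComponentMk ⟨v, h⟩).supp.ncard then
    some (Sum.inr ⟨(G.induce Xᶜ).connectedComponentMk ⟨v, h⟩, ho⟩)
  else none

/-- The support of the contraction `P/K_1/⋯/K_l` of a path of `G` to `H_X(G)`. -/
noncomputable def contractSupport (G : SimpleGraph V) (X : Set V) (l : List V) :
    List (HVert G X) := by
  classical
  exact List.destutter (· ≠ ·) ((l.map (projV G X)).reduceOption)

/-- One step of the Dulmage–Mendelsohn relation with respect to the color class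
`A`: some edge joins `B ∩ V(c)` to `A ∩ V(d)`. -/
def dmStep (H : SimpleGraph W) (A : Set W)
    (c d : (allowedSubgraph H).ConnectedComponent) : Prop :=
  ∃ b a : W, b ∉ A ∧ a ∈ A ∧ b ∈ c.supp ∧ a ∈ d.supp ∧ H.Adj b a

/-- The Dulmage–Mendelsohn order `⪯` with respect to `A`. -/
def dmLE (H : SimpleGraph W) (A : Set W) :
    (allowedSubgraph H).ConnectedComponent →
      (allowedSubgraph H).ConnectedComponent → Prop :=
  Relation.ReflTransGen (dmStep H A)

/-- The vertex set of the expansion of a DM-component `c` of `H_X(G)`. -/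
def expansionVerts (G : SimpleGraph V) (X : Set V)
    (c : (allowedSubgraph (HGraph G X)).ConnectedComponent) : Set V :=
  {v | (∃ h : v ∈ X, Sum.inl ⟨v, h⟩ ∈ c.supp) ∨
       (∃ (h : v ∈ Xᶜ) (ho : Odd ((G.induce Xᶜ).connectedComponentMk ⟨v, h⟩).supp.ncard),
         Sum.inr ⟨(G.induce Xᶜ).connectedComponentMk ⟨v, h⟩, ho⟩ ∈ c.supp)}

/-- A set of edges forms a perfect matching of `H`. -/
def IsPerfectMatchingSet (H : SimpleGraph W) (F : Set (Sym2 W)) : Prop :=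
  F ⊆ H.edgeSet ∧ ∀ w : W, ∃! e : Sym2 W, e ∈ F ∧ w ∈ e

/-- The graph `P − E(H)`: the edges of the path `p` that are not edges of the
induced subgraph `G[C]`. -/
def earGraph (G : SimpleGraph V) (C : Set V) {u v : V} (p : G.Walk u v) :
    SimpleGraph V :=
  SimpleGraph.fromEdgeSet {e | e ∈ p.edges ∧ ¬ ∀ z ∈ e, z ∈ C}

/-- `K` is a connected component of `Q` containing at least one edge. -/
def IsEdgeComponentOf (Q : SimpleGraph V) (K : Set V) : Prop :=
  ∃ a b : V, Q.Adj a b ∧ K = {w | Q.Reachable a w}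

/-- The end vertices of a path-component `K` of `Q` (vertices of degree `≤ 1`). -/
def pathEnds (Q : SimpleGraph V) (K : Set V) : Set V :=
  {z ∈ K | ¬ ∃ w₁ w₂ : V, w₁ ≠ w₂ ∧ Q.Adj z w₁ ∧ Q.Adj z w₂}

/-- The maximum size of a matching of `G`. -/
noncomputable def matchNum (G : SimpleGraph V) : ℕ :=
  sSup {n : ℕ | ∃ M : SimpleGraph.Subgraph G, M.IsMatching ∧ M.edgeSet.ncard = n}

/-- A barrier of a general graph, via the Berge formula. -/
def IsBarrierGen [Fintype V] (G : SimpleGraph V) (X : Set V) : Prop :=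
  qG G X = (Fintype.card V - 2 * matchNum G) + X.ncard

/-- An odd-maximal barrier of a general graph. -/
def IsOddMaximalBarrierGen [Fintype V] (G : SimpleGraph V) (X : Set V) : Prop :=
  IsBarrierGen G X ∧ ∀ Y ⊆ DX G X, Y.Nonempty → ¬ IsBarrierGen G (X ∪ Y)

end Defs

section Stmt4Proof

namespace Stmt4Aux

open SimpleGraph

variable {V : Type*}

noncomputable def XM {G : SimpleGraph V} {M : SimpleGraph.Subgraph G}
    (hM : M.IsPerfectMatching) (v : V) : V :=
  (hM.1 (hM.2 v)).choose

lemma XM_adj {G : SimpleGraph V} {M : SimpleGraph.Subgraph G}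
    (hM : M.IsPerfectMatching) (v : V) : M.Adj v (XM hM v) :=
  (hM.1 (hM.2 v)).choose_spec.1

lemma XM_eq {G : SimpleGraph V} {M : SimpleGraph.Subgraph G}
    (hM : M.IsPerfectMatching) {v w : V} (h : M.Adj v w) : w = XM hM v :=
  (hM.1 (hM.2 v)).choose_spec.2 w h

lemma XM_invol {G : SimpleGraph V} {M : SimpleGraph.Subgraph G}
    (hM : M.IsPerfectMatching) (v : V) : XM hM (XM hM v) = v :=
  (XM_eq hM (XM_adj hM v).symm).symm

/-- The component of a vertex of `Xᶜ`. -/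
abbrev cOf (G : SimpleGraph V) (X : Set V) (z : V) (h : z ∈ Xᶜ) :
    (G.induce Xᶜ).ConnectedComponent :=
  (G.induce Xᶜ).connectedComponentMk ⟨z, h⟩

lemma cOf_adj {G : SimpleGraph V} {X : Set V} {z z' : V} (hz : z ∈ Xᶜ) (hz' : z' ∈ Xᶜ)
    (h : G.Adj z z') : cOf G X z hz = cOf G X z' hz' :=
  ConnectedComponent.sound (SimpleGraph.Adj.reachable
    (show (G.induce Xᶜ).Adj ⟨z, hz⟩ ⟨z', hz'⟩ from h))

lemma projV_X {G : SimpleGraph V} {X : Set V} {v : V} (hv : v ∈ X) :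
    projV G X v = some (Sum.inl ⟨v, hv⟩) := by
  unfold projV
  rw [dif_pos hv]

lemma projV_odd {G : SimpleGraph V} {X : Set V} {v : V} (hv : v ∈ Xᶜ)
    (ho : Odd ((G.induce Xᶜ).connectedComponentMk ⟨v, hv⟩).supp.ncard) :
    projV G X v = some (Sum.inr ⟨cOf G X v hv, ho⟩) := by
  unfold projV
  rw [dif_neg hv, dif_pos ho]

lemma projV_eq_inl {G : SimpleGraph V} {X : Set V} {z : V} {x : {x : V // x ∈ X}}
    (h : projV G X z = some (Sum.inl x)) : z = x.1 := by
  unfold projV at h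
  by_cases hz : z ∈ X
  · rw [dif_pos hz] at h
    obtain rfl : (⟨z, hz⟩ : {x : V // x ∈ X}) = x := by simpa using h
    rfl
  · rw [dif_neg hz] at h
    by_cases ho : Odd ((G.induce Xᶜ).connectedComponentMk ⟨z, hz⟩).supp.ncard
    · rw [dif_pos ho] at h; simp at h
    · rw [dif_neg ho] at h; simp at h

lemma projV_eq_inr {G : SimpleGraph V} {X : Set V} {z : V} {c : OddCompT G X}
    (h : projV G X z = some (Sum.inr c)) : ∃ hz : z ∈ Xᶜ, cOf G X z hz = c.1 := by
  unfold projV at h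
  by_cases hz : z ∈ X
  · rw [dif_pos hz] at h; simp at h
  · rw [dif_neg hz] at h
    by_cases ho : Odd ((G.induce Xᶜ).connectedComponentMk ⟨z, hz⟩).supp.ncard
    · rw [dif_pos ho] at h
      refine ⟨hz, ?_⟩
      obtain h' : (⟨_, ho⟩ : OddCompT G X) = c := by simpa using h
      rw [← h']
    · rw [dif_neg ho] at h; simp at h

lemma mem_contractSupport {G : SimpleGraph V} {X : Set V} {x : HVert G X} {l : List V}
    (h : x ∈ contractSupport G X l) : ∃ z ∈ l, projV G X z = some x := by
  classical
  unfold contractSupport at h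
  have h1 := (List.destutter_sublist _ _).mem h
  rw [List.reduceOption_mem_iff] at h1
  obtain ⟨z, hz, hz'⟩ := List.mem_map.1 h1
  exact ⟨z, hz, hz'⟩

lemma contractSupport_singleton {G : SimpleGraph V} {X : Set V} {z : V} {x : HVert G X}
    (h : projV G X z = some x) : contractSupport G X [z] = [x] := by
  classical
  unfold contractSupport
  simp [h, List.destutter]

lemma contractSupport_cons_ne {G : SimpleGraph V} {X : Set V} {z z₂ : V} {l : List V}
    {x y : HVert G X} (hz : projV G X z = some x) (hz₂ : projV G X z₂ = some y)
    (hne : x ≠ y) :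
    contractSupport G X (z :: z₂ :: l) = x :: contractSupport G X (z₂ :: l) := by
  classical
  unfold contractSupport
  rw [List.map_cons, List.map_cons, hz, hz₂,
    List.reduceOption_cons_of_some, List.reduceOption_cons_of_some,
    List.destutter_cons_cons, if_pos hne]
  rfl

lemma contractSupport_cons_eq {G : SimpleGraph V} {X : Set V} {z z₂ : V} {l : List V}
    {x : HVert G X} (hz : projV G X z = some x) (hz₂ : projV G X z₂ = some x) :
    contractSupport G X (z :: z₂ :: l) = contractSupport G X (z₂ :: l) := by
  classical
  unfold contractSupport
  rw [List.map_cons, List.map_cons, hz, hz₂,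
    List.reduceOption_cons_of_some, List.reduceOption_cons_of_some,
    List.destutter_cons_cons, if_neg (by simp)]
  rfl

/-- Alternating list of edges with a parity flag. -/
def AltL (F : Set (Sym2 V)) (b : Bool) (l : List (Sym2 V)) : Prop :=
  ∀ (i : ℕ) (h : i < l.length), (l.get ⟨i, h⟩ ∈ F ↔ (Even i ↔ b = true))

lemma altL_nil {F : Set (Sym2 V)} {b : Bool} : AltL F b [] := by
  intro i h; simp at h

lemma altL_cons_iff {F : Set (Sym2 V)} {b : Bool} {e : Sym2 V} {l : List (Sym2 V)} :
    AltL F b (e :: l) ↔ (e ∈ F ↔ b = true) ∧ AltL F (!b) l := by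
  constructor
  · intro h
    refine ⟨by simpa using h 0 (by simp), fun i hi => ?_⟩
    have := h (i + 1) (by simpa using hi)
    simp only [List.get_cons_succ] at this
    rw [this, Nat.even_add_one]
    cases b <;> by_cases he : Even i <;> simp [he]
  · rintro ⟨h1, h2⟩ i hi
    cases i with
    | zero => simpa using h1
    | succ i =>
      have hi' : i < l.length := by simpa using hi
      have := h2 i hi'
      simp only [List.get_cons_succ]
      rw [this, Nat.even_add_one]
      cases b <;> by_cases he : Even i <;> simp [he]

lemma isAltList_iff_altL {F : Set (Sym2 V)} {l : List (Sym2 V)} :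
    IsAltList F l ↔ AltL F true l := by
  unfold IsAltList AltL
  simp

lemma bool_flip {a b : Bool} : (¬ (a = b)) ↔ a = !b := by cases a <;> cases b <;> simp

lemma mem_projEdges_intro {G : SimpleGraph V} {X : Set V} {M : SimpleGraph.Subgraph G}
    {x : {x : V // x ∈ X}} {c : OddCompT G X} {y : V} (hy : y ∈ Xᶜ)
    (hc : cOf G X y hy = c.1) (hme : s(x.1, y) ∈ M.edgeSet) :
    s(Sum.inl x, Sum.inr c) ∈ projEdges G X M :=
  ⟨x, c, ⟨y, hy⟩, hc, hme, rfl⟩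

lemma mem_projEdges_elim {G : SimpleGraph V} {X : Set V} {M : SimpleGraph.Subgraph G}
    {x : {x : V // x ∈ X}} {c : OddCompT G X}
    (h : s(Sum.inl x, Sum.inr c) ∈ projEdges G X M) :
    ∃ (y : V) (hy : y ∈ Xᶜ), cOf G X y hy = c.1 ∧ s(x.1, y) ∈ M.edgeSet := by
  obtain ⟨x', c', y, hcomp, hme, he⟩ := h
  rw [Sym2.eq_iff] at he
  rcases he with ⟨h1, h2⟩ | ⟨h1, h2⟩
  · obtain rfl : x = x' := by simpa using h1
    obtain rfl : c = c' := by simpa using h2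
    exact ⟨y.1, y.2, hcomp, hme⟩
  · simp at h1

theorem structure_lemma {G : SimpleGraph V} {X : Set V} {M : SimpleGraph.Subgraph G}
    [Fintype V] (hM : M.IsPerfectMatching) (hbar : qG G X = X.ncard) :
    (∀ x, x ∈ X → ∃ h : XM hM x ∈ Xᶜ, Odd (cOf G X (XM hM x) h).supp.ncard) ∧
    (∀ z z' (hz : z ∈ Xᶜ) (hz' : z' ∈ Xᶜ), XM hM z ∈ X → XM hM z' ∈ X →
      cOf G X z hz = cOf G X z' hz' → z = z') := by
  classical
  -- every odd component has a vertex matched into X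
  have hpar : ∀ c : (G.induce Xᶜ).ConnectedComponent, Odd c.supp.ncard →
      ∃ (z : V) (hz : z ∈ Xᶜ), cOf G X z hz = c ∧ XM hM z ∈ X := by
    intro c hodd
    by_contra hcon
    push_neg at hcon
    set s : Set V := Subtype.val '' c.supp with hs
    have hmem : ∀ v : V, v ∈ s ↔ ∃ hv : v ∈ Xᶜ, cOf G X v hv = c := by
      intro v; constructor
      · rintro ⟨⟨v', hv'⟩, hv'supp, rfl⟩
        exact ⟨hv', (SimpleGraph.ConnectedComponent.mem_supp_iff _ _).1 hv'supp⟩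
      · rintro ⟨hv, hcv⟩
        exact ⟨⟨v, hv⟩, (SimpleGraph.ConnectedComponent.mem_supp_iff _ _).2 hcv, rfl⟩
    have hclosed : ∀ v ∈ s, XM hM v ∈ s := by
      intro v hv
      obtain ⟨hv', hcv⟩ := (hmem v).1 hv
      have hxm : XM hM v ∉ X := hcon v hv' hcv
      have hadj : G.Adj v (XM hM v) := (XM_adj hM v).adj_sub
      exact (hmem _).2 ⟨hxm, (cOf_adj hv' hxm hadj).symm.trans hcv⟩
    have hN : (M.induce s).IsMatching := by
      intro v hv
      refine ⟨XM hM v, ⟨hv, hclosed v hv, XM_adj hM v⟩, ?_⟩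
      rintro y ⟨-, -, hy⟩
      exact XM_eq hM hy
    letI : Fintype ↥((M.induce s).verts) := Fintype.ofFinite _
    have heven := SimpleGraph.Subgraph.IsMatching.even_card hN
    rw [Set.toFinset_card, ← Nat.card_eq_fintype_card] at heven
    have hcast : Nat.card ↥((M.induce s).verts) = Nat.card ↥s := rfl
    rw [hcast, Nat.card_coe_set_eq] at heven
    rw [hs, Set.ncard_image_of_injective _ Subtype.val_injective] at heven
    exact (Nat.not_odd_iff_even.mpr heven) hodd
  set T : Set ((G.induce Xᶜ).ConnectedComponent) := {c | Odd c.supp.ncard} with hT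
  set S : Set V := {z | ∃ _ : z ∈ Xᶜ, XM hM z ∈ X} with hS
  set So : Set V := {z | ∃ hz : z ∈ Xᶜ, Odd (cOf G X z hz).supp.ncard ∧ XM hM z ∈ X}
    with hSo
  set g : V → Option ((G.induce Xᶜ).ConnectedComponent) :=
    fun z => if hz : z ∈ Xᶜ then some (cOf G X z hz) else none with hg
  have hTX : T.ncard = X.ncard := hbar
  have hsub1 : So ⊆ S := by rintro z ⟨hz, _, hzX⟩; exact ⟨hz, hzX⟩
  have hinjXM : ∀ s' : Set V, s' ⊆ S → Set.InjOn (XM hM) s' := by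
    intro s' hs' z hz z' hz' h
    have := congrArg (XM hM) h
    rwa [XM_invol, XM_invol] at this
  have hSle : S.ncard ≤ X.ncard := by
    refine Set.ncard_le_ncard_of_injOn (XM hM) ?_ (hinjXM S le_rfl) (Set.toFinite _)
    rintro z ⟨hz, hzX⟩; exact hzX
  have himg : g '' So = some '' T := by
    apply Set.Subset.antisymm
    · rintro _ ⟨z, ⟨hz, hzodd, hzX⟩, rfl⟩
      exact ⟨cOf G X z hz, hzodd, by rw [hg]; simp only [dif_pos hz]⟩
    · rintro _ ⟨c, hc, rfl⟩
      obtain ⟨z, hz, hcz, hzX⟩ := hpar c hc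
      refine ⟨z, ⟨hz, by rw [hcz]; exact hc, hzX⟩, ?_⟩
      rw [hg]; simp only [dif_pos hz, hcz]
  have hcard1 : (some '' T).ncard = X.ncard := by
    rw [Set.ncard_image_of_injective _ (Option.some_injective _), hTX]
  have hXleSo : X.ncard ≤ So.ncard := by
    calc X.ncard = (g '' So).ncard := by rw [himg, hcard1]
    _ ≤ So.ncard := Set.ncard_image_le (Set.toFinite _)
  have hSoS : So = S :=
    Set.eq_of_subset_of_ncard_le hsub1 (le_trans hSle hXleSo) (Set.toFinite _)
  have hginj : Set.InjOn g So := by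
    rw [← Set.ncard_image_iff (Set.toFinite _)]
    rw [himg, hcard1]
    exact le_antisymm hXleSo (le_trans (Set.ncard_le_ncard hsub1 (Set.toFinite _)) hSle)
  have himgXM : XM hM '' So = X := by
    apply Set.eq_of_subset_of_ncard_le
    · rintro _ ⟨z, ⟨hz, hzodd, hzX⟩, rfl⟩; exact hzX
    · rw [Set.ncard_image_of_injOn (hinjXM So hsub1)]; exact hXleSo
    · exact Set.toFinite _
  constructor
  · intro x hx
    rw [← himgXM] at hx
    obtain ⟨z, hzSo, hzx⟩ := hx
    obtain ⟨hz, hzodd, hzX⟩ := hzSo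
    have hxz : XM hM x = z := by rw [← hzx, XM_invol]
    exact ⟨by rw [hxz]; exact hz, by
      have : ∀ h' : XM hM x ∈ Xᶜ, cOf G X (XM hM x) h' = cOf G X z hz := by
        intro h'; exact congrArg (G.induce Xᶜ).connectedComponentMk (Subtype.ext hxz)
      rw [this _]; exact hzodd⟩
  · intro z z' hz hz' hzX hz'X hcomp
    have h1 : z ∈ So := by rw [hSoS]; exact ⟨hz, hzX⟩
    have h2 : z' ∈ So := by rw [hSoS]; exact ⟨hz', hz'X⟩
    apply hginj h1 h2
    rw [hg]; simp only [dif_pos hz, dif_pos hz', hcomp]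

lemma hgraph_adj {G : SimpleGraph V} {X : Set V} {x : {x : V // x ∈ X}} {c : OddCompT G X}
    {y : V} (hy : y ∈ Xᶜ) (hc : cOf G X y hy = c.1) (hadj : G.Adj x.1 y) :
    (HGraph G X).Adj (Sum.inl x) (Sum.inr c) := by
  unfold HGraph
  rw [SimpleGraph.fromRel_adj]
  exact ⟨by simp, Or.inl ⟨x, c, ⟨y, hy⟩, rfl, rfl, hc, hadj⟩⟩

theorem main {G : SimpleGraph V} {X : Set V} {M : SimpleGraph.Subgraph G} [Fintype V]
    (hM : M.IsPerfectMatching)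
    (hfact : ∀ x, x ∈ X → ∃ h : XM hM x ∈ Xᶜ, Odd (cOf G X (XM hM x) h).supp.ncard)
    (huniq : ∀ z z' (hz : z ∈ Xᶜ) (hz' : z' ∈ Xᶜ), XM hM z ∈ X → XM hM z' ∈ X →
      cOf G X z hz = cOf G X z' hz' → z = z')
    (t : V) (e : HVert G X) (tb : Bool)
    (htgt : (∃ h : t ∈ X, e = Sum.inl ⟨t, h⟩ ∧ tb = true) ∨
      (∃ (h : t ∈ Xᶜ) (ho : Odd (cOf G X t h).supp.ncard),
        e = Sum.inr ⟨cOf G X t h, ho⟩ ∧ tb = false)) :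
    ∀ n : ℕ, ∀ (a : V) (p : G.Walk a t), p.length = n → p.IsPath →
      ((∀ ha : a ∈ X, AltL M.edgeSet true p.edges → (Even n ↔ tb = true) →
        (∀ z ∈ p.support, z ∈ X ∪ DX G X) ∧
        (∀ z ∈ p.support, ∀ hz : z ∈ Xᶜ,
          ∃ b' ∈ p.support, ∃ hb' : b' ∈ Xᶜ, cOf G X b' hb' = cOf G X z hz ∧ XM hM b' ∈ X) ∧
        ∃ p' : (HGraph G X).Walk (Sum.inl ⟨a, ha⟩) e, p'.IsPath ∧
          AltL (projEdges G X M) true p'.edges ∧ (Even p'.length ↔ tb = true) ∧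
          p'.support = contractSupport G X p.support) ∧
      (∀ (ha : a ∈ Xᶜ) (hodd : Odd (cOf G X a ha).supp.ncard) (ε : Bool),
        AltL M.edgeSet ε p.edges → (Even n ↔ tb = ε) →
        (∀ z ∈ p.support, ∀ hz : z ∈ Xᶜ, cOf G X z hz = cOf G X a ha → XM hM z ∈ X →
          z = a ∧ ε = false) →
        (∀ z ∈ p.support, z ∈ X → ∀ h2 : XM hM z ∈ Xᶜ,
          cOf G X (XM hM z) h2 ≠ cOf G X a ha) →
        (∀ z ∈ p.support, z ∈ X ∪ DX G X) ∧
        (∀ z ∈ p.support, ∀ hz : z ∈ Xᶜ, cOf G X z hz = cOf G X a ha ∨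
          ∃ b' ∈ p.support, ∃ hb' : b' ∈ Xᶜ, cOf G X b' hb' = cOf G X z hz ∧ XM hM b' ∈ X) ∧
        ∃ p' : (HGraph G X).Walk (Sum.inr ⟨cOf G X a ha, hodd⟩) e, p'.IsPath ∧
          AltL (projEdges G X M) false p'.edges ∧ (Even p'.length ↔ tb = false) ∧
          p'.support = contractSupport G X p.support)) := by
  intro n
  induction n using Nat.strong_induction_on with
  | _ n IH =>
  intro a p hlen hp
  constructor
  · -- State A : at a vertex of X, next edge is an M-edge
    intro ha halt hpar
    cases p with
    | nil =>
      rcases htgt with ⟨ht, he, htb⟩ | ⟨ht, ho, he, htb⟩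
      · have hea : e = Sum.inl ⟨t, ha⟩ := by rw [he]
        refine ⟨?_, ?_, Walk.nil.copy rfl hea.symm, ?_, ?_, ?_, ?_⟩
        · intro z hz
          simp only [Walk.support_nil, List.mem_singleton] at hz
          subst hz; exact Or.inl ha
        · intro z hz hzc
          simp only [Walk.support_nil, List.mem_singleton] at hz
          subst hz; exact absurd ha hzc
        · rw [Walk.isPath_copy]; exact Walk.IsPath.nil
        · rw [Walk.edges_copy, Walk.edges_nil]; exact altL_nil
        · rw [Walk.length_copy, Walk.length_nil]; simp [htb]
        · rw [Walk.support_copy, Walk.support_nil, Walk.support_nil,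
            contractSupport_singleton (projV_X ha)]
      · exact absurd ha ht
    | cons hadj q =>
      rename_i b
      rw [Walk.length_cons] at hlen
      rw [Walk.edges_cons, altL_cons_iff] at halt
      obtain ⟨hhead, htail⟩ := halt
      have hMadj : M.Adj a b := SimpleGraph.Subgraph.mem_edgeSet.1 (hhead.2 rfl)
      have hbXM : b = XM hM a := XM_eq hM hMadj
      obtain ⟨hbXc', hoddb'⟩ := hfact a ha
      have hbXc : b ∈ Xᶜ := by rw [hbXM]; exact hbXc'
      have hcb : cOf G X b hbXc = cOf G X (XM hM a) hbXc' :=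
        congrArg _ (Subtype.ext hbXM)
      have hoddb : Odd (cOf G X b hbXc).supp.ncard := by rw [hcb]; exact hoddb'
      rw [Walk.cons_isPath_iff] at hp
      obtain ⟨hq, haq⟩ := hp
      have hxmb : XM hM b = a := by rw [hbXM, XM_invol]
      have hkey' : ∀ z ∈ q.support, ∀ hz : z ∈ Xᶜ,
          cOf G X z hz = cOf G X b hbXc → XM hM z ∈ X → z = b ∧ false = false := by
        intro z hzq hz hcz hzX
        exact ⟨huniq z b hz hbXc hzX (by rw [hxmb]; exact ha) hcz, rfl⟩
      have hexit' : ∀ z ∈ q.support, z ∈ X → ∀ h2 : XM hM z ∈ Xᶜ,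
          cOf G X (XM hM z) h2 ≠ cOf G X b hbXc := by
        intro z hzq hzX h2 hcz
        have h3 : XM hM (XM hM z) ∈ X := by rw [XM_invol]; exact hzX
        have h4 : XM hM z = b := huniq (XM hM z) b h2 hbXc h3 (by rw [hxmb]; exact ha) hcz
        have h5 : z = a := by
          have h6 := congrArg (XM hM) h4
          rw [XM_invol, hxmb] at h6; exact h6
        exact haq (h5 ▸ hzq)
      have hparq : Even q.length ↔ tb = false := by
        rw [← hlen, Nat.even_add_one] at hpar
        cases tb <;> simp at hpar ⊢ <;> exact hpar
      obtain ⟨hsup, hhb, q', hq'path, hq'alt, hq'par, hq'supp⟩ :=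
        (IH q.length (by omega) b q rfl hq).2 hbXc hoddb false htail hparq hkey' hexit'
      refine ⟨?_, ?_, Walk.cons (hgraph_adj hbXc rfl hadj) q', ?_, ?_, ?_, ?_⟩
      · intro z hz
        rw [Walk.support_cons, List.mem_cons] at hz
        rcases hz with rfl | hz
        · exact Or.inl ha
        · exact hsup z hz
      · intro z hz hzc
        rw [Walk.support_cons, List.mem_cons] at hz
        rcases hz with rfl | hz
        · exact absurd ha hzc
        · rcases hhb z hz hzc with hcz | ⟨b', hb'q, hb', hcb', hb'X⟩
          · exact ⟨b, by rw [Walk.support_cons]; exact List.mem_cons_of_mem _ q.start_mem_support,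
              hbXc, hcz.symm, by rw [hxmb]; exact ha⟩
          · exact ⟨b', by rw [Walk.support_cons]; exact List.mem_cons_of_mem _ hb'q, hb', hcb', hb'X⟩
      · rw [Walk.cons_isPath_iff]
        refine ⟨hq'path, fun hmem => ?_⟩
        rw [hq'supp] at hmem
        obtain ⟨z, hzq, hproj⟩ := mem_contractSupport hmem
        have hza : z = a := projV_eq_inl hproj
        exact haq (hza ▸ hzq)
      · rw [Walk.edges_cons, altL_cons_iff]
        exact ⟨iff_of_true (mem_projEdges_intro hbXc rfl
          (SimpleGraph.Subgraph.mem_edgeSet.2 hMadj)) rfl, hq'alt⟩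
      · rw [Walk.length_cons, Nat.even_add_one]
        cases tb <;> simp at hq'par ⊢ <;> exact hq'par
      · rw [Walk.support_cons, Walk.support_cons, hq'supp, q.support_eq_cons,
          contractSupport_cons_ne (projV_X ha) (projV_odd hbXc hoddb) (by simp),
          ← q.support_eq_cons]
  · -- State B : inside an odd component
    intro ha hodd ε halt hpar hkey hexit
    cases p with
    | nil =>
      rcases htgt with ⟨ht, he, htb⟩ | ⟨ht, ho, he, htb⟩
      · exact absurd ht ha
      · have hea : e = Sum.inr ⟨cOf G X t ha, hodd⟩ := by rw [he]
        refine ⟨?_, ?_, Walk.nil.copy rfl hea.symm, ?_, ?_, ?_, ?_⟩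
        · intro z hz
          simp only [Walk.support_nil, List.mem_singleton] at hz
          subst hz; exact Or.inr ⟨ha, hodd⟩
        · intro z hz hzc
          simp only [Walk.support_nil, List.mem_singleton] at hz
          subst hz; exact Or.inl rfl
        · rw [Walk.isPath_copy]; exact Walk.IsPath.nil
        · rw [Walk.edges_copy, Walk.edges_nil]; exact altL_nil
        · rw [Walk.length_copy, Walk.length_nil]; simp [htb]
        · rw [Walk.support_copy, Walk.support_nil, Walk.support_nil,
            contractSupport_singleton (projV_odd ha hodd)]
    | cons hadj q =>
      rename_i b
      rw [Walk.length_cons] at hlen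
      rw [Walk.edges_cons, altL_cons_iff] at halt
      obtain ⟨hhead, htail⟩ := halt
      rw [Walk.cons_isPath_iff] at hp
      obtain ⟨hq, haq⟩ := hp
      cases ε with
      | true =>
        have hMadj : M.Adj a b := SimpleGraph.Subgraph.mem_edgeSet.1 (hhead.2 rfl)
        have hbXM : b = XM hM a := XM_eq hM hMadj
        have hbXc : b ∈ Xᶜ := by
          simp only [Set.mem_compl_iff]
          intro hbX
          have hk := hkey a (by rw [Walk.support_cons]; exact List.mem_cons_self) ha rfl
            (by rw [← hbXM]; exact hbX)
          exact absurd hk.2 (by simp)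
        have hcb : cOf G X b hbXc = cOf G X a ha := (cOf_adj ha hbXc hadj).symm
        have hoddb : Odd (cOf G X b hbXc).supp.ncard := by rw [hcb]; exact hodd
        have hK : (⟨cOf G X a ha, hodd⟩ : OddCompT G X) = ⟨cOf G X b hbXc, hoddb⟩ :=
          Subtype.ext hcb.symm
        have hkey' : ∀ z ∈ q.support, ∀ hz : z ∈ Xᶜ, cOf G X z hz = cOf G X b hbXc →
            XM hM z ∈ X → z = b ∧ false = false := by
          intro z hzq hz hcz hzX
          have hk := hkey z (by rw [Walk.support_cons]; exact List.mem_cons_of_mem _ hzq) hz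
            (hcz.trans hcb) hzX
          exact absurd hk.2 (by simp)
        have hexit' : ∀ z ∈ q.support, z ∈ X → ∀ h2 : XM hM z ∈ Xᶜ,
            cOf G X (XM hM z) h2 ≠ cOf G X b hbXc := by
          intro z hzq hzX h2 hcz
          exact hexit z (by rw [Walk.support_cons]; exact List.mem_cons_of_mem _ hzq) hzX h2
            (hcz.trans hcb)
        have hparq : Even q.length ↔ tb = false := by
          rw [← hlen, Nat.even_add_one] at hpar
          cases tb <;> simp at hpar ⊢ <;> exact hpar
        obtain ⟨hsup, hhb, q', hq'path, hq'alt, hq'par, hq'supp⟩ :=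
          (IH q.length (by omega) b q rfl hq).2 hbXc hoddb false htail hparq hkey' hexit'
        refine ⟨?_, ?_, ?_⟩
        · intro z hz
          rw [Walk.support_cons, List.mem_cons] at hz
          rcases hz with rfl | hz
          · exact Or.inr ⟨ha, hodd⟩
          · exact hsup z hz
        · intro z hz hzc
          rw [Walk.support_cons, List.mem_cons] at hz
          rcases hz with rfl | hz
          · exact Or.inl rfl
          · rcases hhb z hz hzc with hcz | ⟨b', hb'q, hb', hcb', hb'X⟩
            · exact Or.inl (hcz.trans hcb)
            · exact Or.inr ⟨b', by rw [Walk.support_cons]; exact List.mem_cons_of_mem _ hb'q,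
                hb', hcb', hb'X⟩
        · rw [hK]
          refine ⟨q', hq'path, hq'alt, hq'par, ?_⟩
          rw [Walk.support_cons, q.support_eq_cons,
            contractSupport_cons_eq (projV_odd ha hodd) (by rw [projV_odd hbXc hoddb, ← hK]),
            ← q.support_eq_cons, hq'supp]
      | false =>
        have hnM : s(a, b) ∉ M.edgeSet := fun hmem => by simpa using hhead.1 hmem
        by_cases hbX : b ∈ X
        · -- exit to X
          have hparq : Even q.length ↔ tb = true := by
            rw [← hlen, Nat.even_add_one] at hpar
            cases tb <;> simp at hpar ⊢ <;> exact hpar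
          obtain ⟨hsup, hhb, q', hq'path, hq'alt, hq'par, hq'supp⟩ :=
            (IH q.length (by omega) b q rfl hq).1 hbX htail hparq
          refine ⟨?_, ?_, Walk.cons (hgraph_adj ha rfl hadj.symm).symm q', ?_, ?_, ?_, ?_⟩
          · intro z hz
            rw [Walk.support_cons, List.mem_cons] at hz
            rcases hz with rfl | hz
            · exact Or.inr ⟨ha, hodd⟩
            · exact hsup z hz
          · intro z hz hzc
            rw [Walk.support_cons, List.mem_cons] at hz
            rcases hz with rfl | hz
            · exact Or.inl rfl
            · obtain ⟨b', hb'q, hb', hcb', hb'X⟩ := hhb z hz hzc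
              exact Or.inr ⟨b', by rw [Walk.support_cons]; exact List.mem_cons_of_mem _ hb'q,
                hb', hcb', hb'X⟩
          · rw [Walk.cons_isPath_iff]
            refine ⟨hq'path, fun hmem => ?_⟩
            rw [hq'supp] at hmem
            obtain ⟨z, hzq, hproj⟩ := mem_contractSupport hmem
            obtain ⟨hz, hcz⟩ := projV_eq_inr hproj
            obtain ⟨b', hb'q, hb', hcb', hb'X⟩ := hhb z hzq hz
            have hk := hkey b' (by rw [Walk.support_cons]; exact List.mem_cons_of_mem _ hb'q)
              hb' (hcb'.trans hcz) hb'X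
            exact haq (hk.1 ▸ hb'q)
          · rw [Walk.edges_cons, altL_cons_iff]
            refine ⟨iff_of_false ?_ (by simp), hq'alt⟩
            intro hmem
            rw [Sym2.eq_swap] at hmem
            obtain ⟨y, hy, hcy, hme⟩ := mem_projEdges_elim hmem
            have hyx : y = XM hM b := XM_eq hM (SimpleGraph.Subgraph.mem_edgeSet.1 hme)
            have h2 : XM hM b ∈ Xᶜ := hyx ▸ hy
            have hbmem : b ∈ (Walk.cons hadj q).support := by
              rw [Walk.support_cons]; exact List.mem_cons_of_mem _ q.start_mem_support
            have hse : (⟨XM hM b, h2⟩ : {x : V // x ∈ Xᶜ}) = ⟨y, hy⟩ := Subtype.ext hyx.symm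
            exact hexit b hbmem hbX h2
              ((congrArg (G.induce Xᶜ).connectedComponentMk hse).trans hcy)
          · rw [Walk.length_cons, Nat.even_add_one]
            cases tb <;> simp at hq'par ⊢ <;> exact hq'par
          · rw [Walk.support_cons, Walk.support_cons, hq'supp, q.support_eq_cons,
              contractSupport_cons_ne (projV_odd ha hodd) (projV_X hbX) (by simp),
              ← q.support_eq_cons]
        · -- stay inside the component
          have hbXc : b ∈ Xᶜ := hbX
          have hcb : cOf G X b hbXc = cOf G X a ha := (cOf_adj ha hbXc hadj).symm
          have hoddb : Odd (cOf G X b hbXc).supp.ncard := by rw [hcb]; exact hodd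
          have hK : (⟨cOf G X a ha, hodd⟩ : OddCompT G X) = ⟨cOf G X b hbXc, hoddb⟩ :=
            Subtype.ext hcb.symm
          have hkey' : ∀ z ∈ q.support, ∀ hz : z ∈ Xᶜ, cOf G X z hz = cOf G X b hbXc →
              XM hM z ∈ X → z = b ∧ true = false := by
            intro z hzq hz hcz hzX
            have hk := hkey z (by rw [Walk.support_cons]; exact List.mem_cons_of_mem _ hzq) hz
              (hcz.trans hcb) hzX
            exact absurd (hk.1 ▸ hzq) haq
          have hexit' : ∀ z ∈ q.support, z ∈ X → ∀ h2 : XM hM z ∈ Xᶜ,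
              cOf G X (XM hM z) h2 ≠ cOf G X b hbXc := by
            intro z hzq hzX h2 hcz
            exact hexit z (by rw [Walk.support_cons]; exact List.mem_cons_of_mem _ hzq) hzX h2
              (hcz.trans hcb)
          have hparq : Even q.length ↔ tb = true := by
            rw [← hlen, Nat.even_add_one] at hpar
            cases tb <;> simp at hpar ⊢ <;> exact hpar
          obtain ⟨hsup, hhb, q', hq'path, hq'alt, hq'par, hq'supp⟩ :=
            (IH q.length (by omega) b q rfl hq).2 hbXc hoddb true htail hparq hkey' hexit'
          refine ⟨?_, ?_, ?_⟩
          · intro z hz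
            rw [Walk.support_cons, List.mem_cons] at hz
            rcases hz with rfl | hz
            · exact Or.inr ⟨ha, hodd⟩
            · exact hsup z hz
          · intro z hz hzc
            rw [Walk.support_cons, List.mem_cons] at hz
            rcases hz with rfl | hz
            · exact Or.inl rfl
            · rcases hhb z hz hzc with hcz | ⟨b', hb'q, hb', hcb', hb'X⟩
              · exact Or.inl (hcz.trans hcb)
              · exact Or.inr ⟨b', by rw [Walk.support_cons]; exact List.mem_cons_of_mem _ hb'q,
                  hb', hcb', hb'X⟩
          · rw [hK]
            refine ⟨q', hq'path, hq'alt, hq'par, ?_⟩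
            rw [Walk.support_cons, q.support_eq_cons,
              contractSupport_cons_eq (projV_odd ha hodd) (by rw [projV_odd hbXc hoddb, ← hK]),
              ← q.support_eq_cons, hq'supp]

end Stmt4Aux

end Stmt4Proof

theorem stmt4 {V : Type*} [Fintype V] (G : SimpleGraph V) (hG : Factorizable G)
    (X : Set V) (hX : IsOddMaximalBarrier G X)
    (M : SimpleGraph.Subgraph G) (hM : M.IsPerfectMatching)
    (u v w : V) (hu : u ∈ X) (hv : v ∈ X)
    (hw : w ∈ Xᶜ)
    (how : Odd ((G.induce Xᶜ).connectedComponentMk ⟨w, hw⟩).supp.ncard) :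
    (∀ p : G.Walk u v, IsBalancedPath M.edgeSet p →
      (∀ z ∈ p.support, z ∈ X ∪ DX G X) ∧
      ∃ p' : (HGraph G X).Walk (Sum.inl ⟨u, hu⟩) (Sum.inl ⟨v, hv⟩),
        IsBalancedPath (projEdges G X M) p' ∧
        p'.support = contractSupport G X p.support) ∧
    (∀ p : G.Walk u w, IsSaturatedPath M.edgeSet p →
      (∀ z ∈ p.support, z ∈ X ∪ DX G X) ∧
      ∃ p' : (HGraph G X).Walk (Sum.inl ⟨u, hu⟩)
          (Sum.inr ⟨(G.induce Xᶜ).connectedComponentMk ⟨w, hw⟩, how⟩),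
        IsSaturatedPath (projEdges G X M) p' ∧
        p'.support = contractSupport G X p.support) := by
  classical
  obtain ⟨hfact, huniq⟩ := Stmt4Aux.structure_lemma hM hX.1
  constructor
  · intro p hbp
    obtain ⟨hp, hev, halt⟩ := hbp
    have halt' : Stmt4Aux.AltL M.edgeSet true p.edges := Stmt4Aux.isAltList_iff_altL.1 halt
    obtain ⟨hsup, -, p', hp'path, hp'alt, hp'par, hp'supp⟩ :=
      (Stmt4Aux.main hM hfact huniq v (Sum.inl ⟨v, hv⟩) true
        (Or.inl ⟨hv, rfl, rfl⟩) p.length u p rfl hp).1 hu halt' (by simpa using hev)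
    exact ⟨hsup, p', ⟨hp'path, by simpa using hp'par,
      Stmt4Aux.isAltList_iff_altL.2 hp'alt⟩, hp'supp⟩
  · intro p hsp
    obtain ⟨hp, hod, halt⟩ := hsp
    have halt' : Stmt4Aux.AltL M.edgeSet true p.edges := Stmt4Aux.isAltList_iff_altL.1 halt
    obtain ⟨hsup, -, p', hp'path, hp'alt, hp'par, hp'supp⟩ :=
      (Stmt4Aux.main hM hfact huniq w
        (Sum.inr ⟨(G.induce Xᶜ).connectedComponentMk ⟨w, hw⟩, how⟩) false
        (Or.inr ⟨hw, how, rfl, rfl⟩) p.length u p rfl hp).1 hu halt'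
        (iff_of_false (by simpa using Nat.not_even_iff_odd.mpr hod) (by simp))
    exact ⟨hsup, p', ⟨hp'path, Nat.not_even_iff_odd.mp (by simpa using hp'par),
      Stmt4Aux.isAltList_iff_altL.2 hp'alt⟩, hp'supp⟩
end

section
/- Let G be a factorizable graph, X an odd-maximal barrier of G, D_1, …, D_k the DM-components of H_X(G), and D̂_1, …, D̂_k their expansions. Then: (i) the sets V(D̂_1), …, V(D̂_k) form a partition of X ∪ D_X; (ii) each V(D̂_i) is separating, and hence D̂_i is factorizable; (iii) X ∩ V(D̂_i) is an odd-maximal barrier of D̂_i; and (iv) H_{X ∩ V(D̂_i)}(D̂_i) is isomorphic to D_i, for each i = 1, …, k. -/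
open SimpleGraph

section Infra
open SimpleGraph
variable {V : Type*} {G : SimpleGraph V}

private lemma mem_supp_of_walk {W : Type*} {H : SimpleGraph W} {a b u : W} (p : H.Walk a b)
    (hu : u ∈ p.support) : H.connectedComponentMk u = H.connectedComponentMk a := by
  classical
  exact ConnectedComponent.sound ((p.takeUntil u hu).reachable.symm)

private lemma reach_induce_of_forall {A B : Set V} {a b : ↥A} (ha : a.1 ∈ B) (hb : b.1 ∈ B)
    (p : (G.induce A).Walk a b) (hp : ∀ u ∈ p.support, (u : ↥A).1 ∈ B) :
    (G.induce B).Reachable ⟨a.1, ha⟩ ⟨b.1, hb⟩ := by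
  induction p with
  | nil => exact Reachable.refl _
  | @cons u v w huv q ih =>
      have hv : v.1 ∈ B := hp v (by simp)
      have h1 : (G.induce B).Adj ⟨u.1, ha⟩ ⟨v.1, hv⟩ := by simpa using huv
      exact h1.reachable.trans (ih hv hb (fun z hz => hp z (by simp [hz])))

/-- image in `V` of the support of a component of an induced subgraph -/
def vsupp {A : Set V} (c : (G.induce A).ConnectedComponent) : Set V := Subtype.val '' c.supp

lemma vsupp_ncard {A : Set V} (c : (G.induce A).ConnectedComponent) :
    (vsupp c).ncard = c.supp.ncard := Set.ncard_image_of_injective _ Subtype.val_injective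

lemma mem_vsupp {A : Set V} {c : (G.induce A).ConnectedComponent} {v : V} :
    v ∈ vsupp c ↔ ∃ h : v ∈ A, (G.induce A).connectedComponentMk ⟨v, h⟩ = c := by
  constructor
  · rintro ⟨u, hu, rfl⟩
    exact ⟨u.2, by rwa [ConnectedComponent.mem_supp_iff] at hu⟩
  · rintro ⟨h, hc⟩
    exact ⟨⟨v, h⟩, by rwa [ConnectedComponent.mem_supp_iff], rfl⟩

lemma vsupp_subset {A : Set V} (c : (G.induce A).ConnectedComponent) : vsupp c ⊆ A := by
  rintro v ⟨u, _, rfl⟩; exact u.2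

lemma comp_eq_of_vsupp_eq {A : Set V} {c d : (G.induce A).ConnectedComponent}
    (h : vsupp c = vsupp d) : c = d := by
  obtain ⟨u, hu⟩ := c.exists_rep
  have hus : u.1 ∈ vsupp c := ⟨u, by exact hu, rfl⟩
  rw [h] at hus
  obtain ⟨w, hw, hwv⟩ := hus
  rw [ConnectedComponent.mem_supp_iff] at hw
  rw [← hu, ← hw]
  congr 1
  exact Subtype.ext hwv.symm

lemma comp_corr {A' A : Set V} (hsub : A' ⊆ A)
    (hcl : ∀ u w : ↥A, u.1 ∈ A' →
      (G.induce A).connectedComponentMk u = (G.induce A).connectedComponentMk w → w.1 ∈ A') :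
    ∃ e : (G.induce A').ConnectedComponent ≃
        {K : (G.induce A).ConnectedComponent // vsupp K ⊆ A'},
      ∀ d, vsupp (e d).1 = vsupp d := by
  classical
  let incl : G.induce A' →g G.induce A :=
    ⟨fun a => ⟨a.1, hsub a.2⟩, fun hadj => by simpa using hadj⟩
  let push : (G.induce A').ConnectedComponent → (G.induce A).ConnectedComponent :=
    ConnectedComponent.map incl
  have hval : ∀ a : ↥A', (incl a).1 = a.1 := fun _ => rfl
  have claim1 : ∀ d, vsupp (push d) = vsupp d := by
    intro d
    apply Set.eq_of_subset_of_subset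
    · rintro v hv
      obtain ⟨u₀, hu₀⟩ := d.exists_rep
      rw [mem_vsupp] at hv
      obtain ⟨hvA, hvc⟩ := hv
      have hpush : push d = (G.induce A).connectedComponentMk (incl u₀) := by
        rw [← hu₀]; exact ConnectedComponent.map_mk incl u₀
      have hreach : (G.induce A).Reachable (incl u₀) ⟨v, hvA⟩ := by
        apply ConnectedComponent.exact
        rw [← hpush, hvc]
      obtain ⟨p⟩ := hreach
      have hsupport : ∀ z ∈ p.support, (z : ↥A).1 ∈ A' := by
        intro z hz
        refine hcl (incl u₀) z u₀.2 ?_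
        exact (mem_supp_of_walk p hz).symm
      have hstart : (incl u₀ : ↥A).1 ∈ A' := hsupport _ p.start_mem_support
      have hend : ((⟨v, hvA⟩ : ↥A)).1 ∈ A' := hsupport _ p.end_mem_support
      have hr := reach_induce_of_forall (B := A') (p := p) hstart hend hsupport
      rw [mem_vsupp]
      refine ⟨hend, ?_⟩
      have h2 := (ConnectedComponent.sound hr).symm
      rw [h2]
      have h3 : (⟨(incl u₀).1, hstart⟩ : ↥A') = u₀ := rfl
      rw [h3]
      exact hu₀
    · rintro v hv
      rw [mem_vsupp] at hv ⊢
      obtain ⟨hvA', hvc⟩ := hv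
      refine ⟨hsub hvA', ?_⟩
      rw [← hvc]
      exact (ConnectedComponent.map_mk incl ⟨v, hvA'⟩)
  have hsubA' : ∀ d, vsupp (push d) ⊆ A' := by
    intro d
    rw [claim1]
    rintro v hv
    rw [mem_vsupp] at hv
    exact hv.1
  let f : (G.induce A').ConnectedComponent →
      {K : (G.induce A).ConnectedComponent // vsupp K ⊆ A'} := fun d => ⟨push d, hsubA' d⟩
  have hinj : Function.Injective f := by
    intro d d' h
    have : push d = push d' := congrArg Subtype.val h
    apply comp_eq_of_vsupp_eq
    rw [← claim1 d, ← claim1 d', this]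
  have hsurj : Function.Surjective f := by
    rintro ⟨K, hK⟩
    obtain ⟨u₀, hu₀⟩ := K.exists_rep
    have hu₀A' : u₀.1 ∈ A' := hK ⟨u₀, (ConnectedComponent.mem_supp_iff K u₀).2 hu₀, rfl⟩
    refine ⟨(G.induce A').connectedComponentMk ⟨u₀.1, hu₀A'⟩, ?_⟩
    apply Subtype.ext
    show push ((G.induce A').connectedComponentMk ⟨u₀.1, hu₀A'⟩) = K
    rw [show push ((G.induce A').connectedComponentMk ⟨u₀.1, hu₀A'⟩) =
      (G.induce A).connectedComponentMk (incl ⟨u₀.1, hu₀A'⟩) from ConnectedComponent.map_mk _ _]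
    have : (incl ⟨u₀.1, hu₀A'⟩ : ↥A) = u₀ := rfl
    rw [this]
    exact hu₀
  refine ⟨Equiv.ofBijective f ⟨hinj, hsurj⟩, fun d => ?_⟩
  show vsupp (f d).1 = vsupp d
  exact claim1 d

end Infra
section Infra2
open SimpleGraph
variable {V : Type*} {G : SimpleGraph V}

/-- iso between a doubly-induced subgraph and a singly-induced one -/
def iInd (S : Set V) (T : Set ↥S) (P : Set V)
    (hP : ∀ v, v ∈ P ↔ ∃ h : v ∈ S, (⟨v, h⟩ : ↥S) ∈ T) :
    (G.induce S).induce T ≃g G.induce P where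
  toEquiv :=
    { toFun := fun a => ⟨a.1.1, (hP _).2 ⟨a.1.2, by simpa using a.2⟩⟩
      invFun := fun v => ⟨⟨v.1, ((hP _).1 v.2).1⟩, ((hP _).1 v.2).2⟩
      left_inv := fun a => by apply Subtype.ext; apply Subtype.ext; rfl
      right_inv := fun v => Subtype.ext rfl }
  map_rel_iff' := by intro a b; simp

lemma iInd_val {S : Set V} {T : Set ↥S} {P : Set V} {hP} (a : ↥T) :
    ((iInd (G := G) S T P hP) a).1 = a.1.1 := rfl

noncomputable def isoCompEquiv {W W' : Type*} {H : SimpleGraph W} {H' : SimpleGraph W'}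
    (f : H ≃g H') : H.ConnectedComponent ≃ H'.ConnectedComponent where
  toFun := ConnectedComponent.map f.toHom
  invFun := ConnectedComponent.map f.symm.toHom
  left_inv := by
    refine ConnectedComponent.ind fun v => ?_
    rw [ConnectedComponent.map_mk, ConnectedComponent.map_mk]
    congr 1
    exact f.symm_apply_apply v
  right_inv := by
    refine ConnectedComponent.ind fun v => ?_
    rw [ConnectedComponent.map_mk, ConnectedComponent.map_mk]
    congr 1
    exact f.apply_symm_apply v

lemma isoCompEquiv_supp {W W' : Type*} {H : SimpleGraph W} {H' : SimpleGraph W'}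
    (f : H ≃g H') (d : H.ConnectedComponent) :
    (isoCompEquiv f d).supp = ⇑f '' d.supp := by
  obtain ⟨v, hv⟩ := d.exists_rep
  have hd : d = H.connectedComponentMk v := hv.symm
  subst hd
  ext w
  simp only [ConnectedComponent.mem_supp_iff, Set.mem_image]
  constructor
  · intro hw
    have : (isoCompEquiv f) (H.connectedComponentMk v) = H'.connectedComponentMk (f v) := ConnectedComponent.map_mk f.toHom v
    rw [this] at hw
    have hr : H'.Reachable w (f v) := ConnectedComponent.exact hw
    refine ⟨f.symm w, ?_, f.apply_symm_apply w⟩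
    have hr2 : H.Reachable (f.symm w) (f.symm (f v)) := by
      obtain ⟨p⟩ := hr
      exact ⟨p.map f.symm.toHom⟩
    rw [f.symm_apply_apply] at hr2
    exact ConnectedComponent.sound hr2
  · rintro ⟨u, hu, rfl⟩
    have hr : H.Reachable u v := ConnectedComponent.exact hu
    have hr2 : H'.Reachable (f u) (f v) := by
      obtain ⟨p⟩ := hr
      exact ⟨p.map f.toHom⟩
    have : (isoCompEquiv f) (H.connectedComponentMk v) = H'.connectedComponentMk (f v) := ConnectedComponent.map_mk f.toHom v
    rw [this]
    exact ConnectedComponent.sound hr2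

lemma isoCompEquiv_supp_ncard {W W' : Type*} {H : SimpleGraph W} {H' : SimpleGraph W'}
    (f : H ≃g H') (d : H.ConnectedComponent) :
    (isoCompEquiv f d).supp.ncard = d.supp.ncard := by
  rw [isoCompEquiv_supp]
  exact Set.ncard_image_of_injective _ f.injective

end Infra2
section PM
open SimpleGraph
variable {V : Type*} [Fintype V] {G : SimpleGraph V} {X : Set V}

lemma exists_matched_outside {M : G.Subgraph} (hM : M.IsPerfectMatching) {A : Set V}
    (hA : Odd A.ncard) : ∃ a ∈ A, ∃ b, b ∉ A ∧ M.Adj a b := by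
  classical
  by_contra h
  push_neg at h
  have hm : (M.induce A).IsMatching := by
    intro v hv
    obtain ⟨w, hw, hu⟩ := hM.1 (hM.2 v)
    have hvA : v ∈ A := hv
    have hwA : w ∈ A := by
      by_contra hwA
      exact (h v hvA w hwA) hw
    exact ⟨w, ⟨hvA, hwA, hw⟩, fun y hy => hu y hy.2.2⟩
  haveI : Fintype ↑(M.induce A).verts := Fintype.ofFinite _
  have he := hm.even_card
  have he2 : Even (Nat.card ↥A) := by
    rwa [Set.toFinset_card, ← Nat.card_eq_fintype_card] at he
  rw [← Nat.card_coe_set_eq] at hA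
  exact (Nat.not_even_iff_odd.2 hA) he2

lemma qG_eq_card (G : SimpleGraph V) (X : Set V) : qG G X = Nat.card (OddCompT G X) :=
  (Nat.card_coe_set_eq _).symm

theorem pm_struct (hB : IsBarrier G X) {M : G.Subgraph} (hM : M.IsPerfectMatching) :
    (∀ x ∈ X, ∀ y, M.Adj x y → ∃ hy : y ∈ Xᶜ,
        Odd ((G.induce Xᶜ).connectedComponentMk ⟨y, hy⟩).supp.ncard) ∧
    (∀ x x', x ∈ X → x' ∈ X → ∀ y y' (hy : y ∈ Xᶜ) (hy' : y' ∈ Xᶜ), M.Adj x y → M.Adj x' y' →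
      (G.induce Xᶜ).connectedComponentMk ⟨y, hy⟩ = (G.induce Xᶜ).connectedComponentMk ⟨y', hy'⟩ →
      x = x') ∧
    (∀ c : OddCompT G X, ∃ x ∈ X, ∃ y, ∃ hy : y ∈ Xᶜ, M.Adj x y ∧
      (G.induce Xᶜ).connectedComponentMk ⟨y, hy⟩ = c.1) := by
  classical
  have E : ∀ c : OddCompT G X, ∃ x : ↥X, ∃ y, ∃ hy : y ∈ Xᶜ, M.Adj x.1 y ∧
      (G.induce Xᶜ).connectedComponentMk ⟨y, hy⟩ = c.1 := by
    intro c
    have hodd : Odd (vsupp c.1).ncard := by rw [vsupp_ncard]; exact c.2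
    obtain ⟨a, haA, b, hbA, hab⟩ := exists_matched_outside hM hodd
    have haX : a ∈ Xᶜ := vsupp_subset _ haA
    have hbX : b ∈ X := by
      by_contra hbX
      apply hbA
      rw [mem_vsupp] at haA ⊢
      obtain ⟨ha, hac⟩ := haA
      refine ⟨hbX, ?_⟩
      rw [← hac]
      exact ConnectedComponent.sound
        (SimpleGraph.Adj.reachable (by simpa using (M.adj_sub hab).symm))
    exact ⟨⟨b, hbX⟩, a, haX, hab.symm, (mem_vsupp.1 haA).2⟩
  choose Φ yf hyf hadjf hcompf using E
  have hinj : Function.Injective Φ := by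
    intro c c' h
    obtain ⟨w, hw, hu⟩ := hM.1 (hM.2 (Φ c).1)
    have h1 : yf c = w := hu _ (hadjf c)
    have h2 : yf c' = w := hu _ (by rw [h]; exact hadjf c')
    have h3 : yf c = yf c' := by rw [h1, h2]
    apply Subtype.ext
    rw [← hcompf c, ← hcompf c']
    congr 1
    exact Subtype.ext h3
  have hcard : Nat.card (OddCompT G X) = Nat.card ↥X := by
    rw [← qG_eq_card, hB, ← Nat.card_coe_set_eq]
  have hbij : Function.Bijective Φ := (Nat.bijective_iff_injective_and_card Φ).2 ⟨hinj, hcard⟩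
  refine ⟨?_, ?_, ?_⟩
  · intro x hx y hxy
    obtain ⟨c, hc⟩ := hbij.2 ⟨x, hx⟩
    obtain ⟨w, hw, hu⟩ := hM.1 (hM.2 x)
    have h1 : yf c = w := hu _ (by have h := hadjf c; rw [hc] at h; exact h)
    have h2 : y = w := hu _ hxy
    subst h2
    rw [← h1]
    exact ⟨hyf c, by rw [hcompf c]; exact c.2⟩
  · intro x x' hx hx' y y' hy hy' hxy hx'y' hcc
    obtain ⟨c, hc⟩ := hbij.2 ⟨x, hx⟩
    obtain ⟨c', hc'⟩ := hbij.2 ⟨x', hx'⟩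
    obtain ⟨w, hw, hu⟩ := hM.1 (hM.2 x)
    have h1 : yf c = w := hu _ (by have h := hadjf c; rw [hc] at h; exact h)
    have h2 : y = w := hu _ hxy
    obtain ⟨w', hw', hu'⟩ := hM.1 (hM.2 x')
    have h1' : yf c' = w' := hu' _ (by have h := hadjf c'; rw [hc'] at h; exact h)
    have h2' : y' = w' := hu' _ hx'y'
    have hceq : c = c' := by
      apply Subtype.ext
      rw [← hcompf c, ← hcompf c']
      have hyy : yf c = y := by rw [h1, ← h2]
      have hyy' : yf c' = y' := by rw [h1', ← h2']
      have e1 : (G.induce Xᶜ).connectedComponentMk ⟨yf c, hyf c⟩ =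
          (G.induce Xᶜ).connectedComponentMk ⟨y, hy⟩ := by
        congr 1; exact Subtype.ext hyy
      have e2 : (G.induce Xᶜ).connectedComponentMk ⟨yf c', hyf c'⟩ =
          (G.induce Xᶜ).connectedComponentMk ⟨y', hy'⟩ := by
        congr 1; exact Subtype.ext hyy'
      rw [e1, e2, hcc]
    have : Φ c = Φ c' := by rw [hceq]
    rw [hc, hc'] at this
    exact congrArg Subtype.val this
  · intro c
    exact ⟨(Φ c).1, (Φ c).2, yf c, hyf c, hadjf c, hcompf c⟩

end PM
section HMs
open SimpleGraph
variable {V : Type*} [Fintype V] {G : SimpleGraph V} {X : Set V}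

omit [Fintype V] in
lemma allowed_adj_iff {u v : V} :
    (allowedSubgraph G).Adj u v ↔ G.Adj u v ∧ Allowed G s(u, v) := by
  rw [allowedSubgraph, fromEdgeSet_adj]
  constructor
  · rintro ⟨⟨h1, h2⟩, hne⟩
    exact ⟨(SimpleGraph.mem_edgeSet G).1 h1, h2⟩
  · rintro ⟨ha, hal⟩
    exact ⟨⟨(SimpleGraph.mem_edgeSet G).2 ha, hal⟩, ha.ne⟩

omit [Fintype V] in
lemma pm_adj_allowed {M : G.Subgraph} (hM : M.IsPerfectMatching) {u v : V} (h : M.Adj u v) :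
    (allowedSubgraph G).Adj u v :=
  allowed_adj_iff.2 ⟨M.adj_sub h, ⟨M, hM, Subgraph.mem_edgeSet.2 h⟩⟩

def HMsub (G : SimpleGraph V) (X : Set V) (M : G.Subgraph) : Subgraph (HGraph G X) where
  verts := Set.univ
  Adj p q := s(p, q) ∈ projEdges G X M
  adj_sub := by
    rintro p q ⟨x, cc, y, hcomp, hedge, he⟩
    have hadj : (HGraph G X).Adj (Sum.inl x) (Sum.inr cc) := by
      rw [HGraph, fromRel_adj]
      exact ⟨by simp, Or.inl ⟨x, cc, y, rfl, rfl, hcomp,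
        M.adj_sub (Subgraph.mem_edgeSet.1 hedge)⟩⟩
    rcases Sym2.eq_iff.1 he with ⟨h1, h2⟩ | ⟨h1, h2⟩
    · rw [h1, h2]; exact hadj
    · rw [h1, h2]; exact hadj.symm
  edge_vert := fun _ => Set.mem_univ _
  symm := by
    refine ⟨fun p q h => ?_⟩
    show s(q, p) ∈ projEdges G X M
    rw [Sym2.eq_swap]
    exact h

omit [Fintype V] in
lemma HMsub_adj_shape {M : G.Subgraph} {p q : HVert G X} (h : (HMsub G X M).Adj p q) :
    ∃ (x : ↥X) (cc : OddCompT G X) (y : (Xᶜ : Set V)),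
      (G.induce Xᶜ).connectedComponentMk y = cc.1 ∧ M.Adj x.1 y.1 ∧
      ((p = Sum.inl x ∧ q = Sum.inr cc) ∨ (p = Sum.inr cc ∧ q = Sum.inl x)) := by
  obtain ⟨x, cc, y, hcomp, hedge, he⟩ := h
  exact ⟨x, cc, y, hcomp, Subgraph.mem_edgeSet.1 hedge, Sym2.eq_iff.1 he⟩

theorem HMsub_isPM (hB : IsBarrier G X) {M : G.Subgraph} (hM : M.IsPerfectMatching) :
    (HMsub G X M).IsPerfectMatching := by
  obtain ⟨hs1, hs2, hs3⟩ := pm_struct hB hM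
  rw [Subgraph.isPerfectMatching_iff]
  intro p
  cases p with
  | inl x =>
      obtain ⟨w, hw, hu⟩ := hM.1 (hM.2 x.1)
      obtain ⟨hwX, hwodd⟩ := hs1 x.1 x.2 w hw
      refine ⟨Sum.inr ⟨(G.induce Xᶜ).connectedComponentMk ⟨w, hwX⟩, hwodd⟩, ?_, ?_⟩
      · exact ⟨x, _, ⟨w, hwX⟩, rfl, Subgraph.mem_edgeSet.2 hw, rfl⟩
      · rintro q hq
        obtain ⟨x', cc', y', hcomp', hedge', hor⟩ := HMsub_adj_shape hq
        rcases hor with ⟨h1, h2⟩ | ⟨h1, h2⟩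
        · have hx' : x = x' := Sum.inl.inj h1
          subst hx'
          have hy' : y'.1 = w := hu _ hedge'
          rw [h2]
          congr 1
          apply Subtype.ext
          rw [← hcomp']
          congr 1
          exact Subtype.ext hy'
        · exact absurd h1 (by simp)
  | inr K =>
      obtain ⟨xv, hxv, y, hy, hxy, hcomp⟩ := hs3 K
      refine ⟨Sum.inl ⟨xv, hxv⟩, ?_, ?_⟩
      · show s(Sum.inr K, Sum.inl (⟨xv, hxv⟩ : ↥X)) ∈ projEdges G X M
        rw [Sym2.eq_swap]
        exact ⟨⟨xv, hxv⟩, K, ⟨y, hy⟩, hcomp, Subgraph.mem_edgeSet.2 hxy, rfl⟩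
      · rintro q hq
        obtain ⟨x', cc', y', hcomp', hedge', hor⟩ := HMsub_adj_shape hq
        rcases hor with ⟨h1, h2⟩ | ⟨h1, h2⟩
        · exact absurd h1 (by simp)
        · have hcc : K = cc' := Sum.inr.inj h1
          subst hcc
          have hx : x'.1 = xv := by
            refine hs2 x'.1 xv x'.2 hxv y'.1 y y'.2 hy hedge' hxy ?_
            have e1 : (G.induce Xᶜ).connectedComponentMk y' = K.1 := hcomp'
            have e2 : (G.induce Xᶜ).connectedComponentMk ⟨y, hy⟩ = K.1 := hcomp
            rw [show (⟨y'.1, y'.2⟩ : (Xᶜ : Set V)) = y' from rfl, e1, ← e2]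
          rw [h2]
          congr 1
          exact Subtype.ext hx

noncomputable def pvf (G : SimpleGraph V) (X : Set V) (v : V) (h : v ∈ X ∪ DX G X) :
    HVert G X := by
  classical
  exact if hx : v ∈ X then Sum.inl ⟨v, hx⟩
  else Sum.inr ⟨(G.induce Xᶜ).connectedComponentMk ⟨v, hx⟩, by
    obtain ⟨h', ho⟩ := h.resolve_left hx
    exact ho⟩

omit [Fintype V] in
lemma pvf_pos {v : V} {h : v ∈ X ∪ DX G X} (hx : v ∈ X) :
    pvf G X v h = Sum.inl ⟨v, hx⟩ := dif_pos hx

omit [Fintype V] in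
lemma pvf_neg {v : V} {h : v ∈ X ∪ DX G X} (hx : v ∉ X)
    (ho : Odd ((G.induce Xᶜ).connectedComponentMk ⟨v, hx⟩).supp.ncard) :
    pvf G X v h = Sum.inr ⟨(G.induce Xᶜ).connectedComponentMk ⟨v, hx⟩, ho⟩ := dif_neg hx

omit [Fintype V] in
lemma mem_expansion_iff {c : (allowedSubgraph (HGraph G X)).ConnectedComponent} {v : V} :
    v ∈ expansionVerts G X c ↔ ∃ h : v ∈ X ∪ DX G X, pvf G X v h ∈ c.supp := by
  simp only [expansionVerts, Set.mem_setOf_eq]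
  constructor
  · rintro (⟨hX, hs⟩ | ⟨hc, ho, hs⟩)
    · exact ⟨Set.mem_union_left _ hX, by rw [pvf_pos hX]; exact hs⟩
    · have hnx : v ∉ X := hc
      exact ⟨Set.mem_union_right _ (show v ∈ DX G X from ⟨hc, ho⟩), by rw [pvf_neg hnx ho]; exact hs⟩
  · rintro ⟨h, hs⟩
    by_cases hx : v ∈ X
    · left; exact ⟨hx, by rwa [pvf_pos hx] at hs⟩
    · right
      obtain ⟨h', ho⟩ := h.resolve_left hx
      refine ⟨hx, ho, ?_⟩
      rwa [pvf_neg hx ho] at hs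

omit [Fintype V] in
lemma mem_expansion_of_memX {c : (allowedSubgraph (HGraph G X)).ConnectedComponent} {v : V}
    (hv : v ∈ X) : v ∈ expansionVerts G X c ↔ Sum.inl ⟨v, hv⟩ ∈ c.supp := by
  rw [mem_expansion_iff]
  constructor
  · rintro ⟨h, hs⟩
    rwa [pvf_pos hv] at hs
  · intro hs
    exact ⟨Set.mem_union_left _ hv, by rw [pvf_pos hv]; exact hs⟩

omit [Fintype V] in
lemma mem_expansion_of_nmemX {c : (allowedSubgraph (HGraph G X)).ConnectedComponent} {v : V}
    (hv : v ∉ X) : v ∈ expansionVerts G X c ↔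
      ∃ ho : Odd ((G.induce Xᶜ).connectedComponentMk ⟨v, hv⟩).supp.ncard,
        Sum.inr ⟨(G.induce Xᶜ).connectedComponentMk ⟨v, hv⟩, ho⟩ ∈ c.supp := by
  rw [mem_expansion_iff]
  constructor
  · rintro ⟨h, hs⟩
    obtain ⟨h', ho⟩ := h.resolve_left hv
    exact ⟨ho, by rwa [pvf_neg hv ho] at hs⟩
  · rintro ⟨ho, hs⟩
    exact ⟨Set.mem_union_right _ (show v ∈ DX G X from ⟨hv, ho⟩), by rw [pvf_neg hv ho]; exact hs⟩

omit [Fintype V] in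
lemma expansion_subset {c : (allowedSubgraph (HGraph G X)).ConnectedComponent} :
    expansionVerts G X c ⊆ X ∪ DX G X := by
  rintro v (⟨h, _⟩ | ⟨h, ho, _⟩)
  · exact Or.inl h
  · exact Or.inr ⟨h, ho⟩

lemma allowed_step (hB : IsBarrier G X) {a b : V} (hab : (allowedSubgraph G).Adj a b)
    (ha : a ∈ X ∪ DX G X) :
    ∃ hb : b ∈ X ∪ DX G X,
      (allowedSubgraph (HGraph G X)).Reachable (pvf G X a ha) (pvf G X b hb) := by
  obtain ⟨hGadj, M, hM, hedge⟩ := allowed_adj_iff.1 hab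
  have hMadj : M.Adj a b := Subgraph.mem_edgeSet.1 hedge
  obtain ⟨hs1, hs2, hs3⟩ := pm_struct hB hM
  by_cases hax : a ∈ X
  · obtain ⟨hbX, hbodd⟩ := hs1 a hax b hMadj
    have hbnX : b ∉ X := hbX
    refine ⟨Set.mem_union_right _ (show b ∈ DX G X from ⟨hbX, hbodd⟩), ?_⟩
    rw [pvf_pos hax, pvf_neg hbnX hbodd]
    apply Adj.reachable
    apply pm_adj_allowed (HMsub_isPM hB hM)
    exact ⟨⟨a, hax⟩, ⟨(G.induce Xᶜ).connectedComponentMk ⟨b, hbX⟩, hbodd⟩, ⟨b, hbX⟩,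
      rfl, hedge, rfl⟩
  · have haX : a ∈ Xᶜ := hax
    obtain ⟨ha', hoa⟩ := ha.resolve_left hax
    by_cases hbx : b ∈ X
    · refine ⟨Set.mem_union_left _ hbx, ?_⟩
      rw [pvf_neg hax hoa, pvf_pos hbx]
      apply Reachable.symm
      apply Adj.reachable
      apply pm_adj_allowed (HMsub_isPM hB hM)
      exact ⟨⟨b, hbx⟩, ⟨(G.induce Xᶜ).connectedComponentMk ⟨a, hax⟩, hoa⟩, ⟨a, haX⟩,
        rfl, Subgraph.mem_edgeSet.2 hMadj.symm, rfl⟩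
    · have hbX : b ∈ Xᶜ := hbx
      have hcomp : (G.induce Xᶜ).connectedComponentMk ⟨a, hax⟩ =
          (G.induce Xᶜ).connectedComponentMk ⟨b, hbX⟩ :=
        ConnectedComponent.sound (Adj.reachable (by simpa using hGadj))
      have hob : Odd ((G.induce Xᶜ).connectedComponentMk ⟨b, hbX⟩).supp.ncard := by
        rw [← hcomp]; exact hoa
      refine ⟨Set.mem_union_right _ (show b ∈ DX G X from ⟨hbX, hob⟩), ?_⟩
      rw [pvf_neg hax hoa, pvf_neg hbx hob]
      have heq : (⟨(G.induce Xᶜ).connectedComponentMk ⟨a, hax⟩, hoa⟩ : OddCompT G X) =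
          ⟨(G.induce Xᶜ).connectedComponentMk ⟨b, hbX⟩, hob⟩ := Subtype.ext hcomp
      rw [heq]

lemma sameFC_transport (hB : IsBarrier G X) {a b : V} (h : SameFC G a b) :
    ∀ ha : a ∈ X ∪ DX G X, ∃ hb : b ∈ X ∪ DX G X,
      (allowedSubgraph (HGraph G X)).Reachable (pvf G X a ha) (pvf G X b hb) := by
  obtain ⟨p⟩ := h
  induction p with
  | nil => exact fun ha => ⟨ha, Reachable.refl _⟩
  | @cons u v w huv q ih =>
      intro ha
      obtain ⟨hv, h1⟩ := allowed_step hB huv ha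
      obtain ⟨hw, h2⟩ := ih hv
      exact ⟨hw, h1.trans h2⟩

lemma cx_step (hB : IsBarrier G X) {a b : V} (hab : (allowedSubgraph G).Adj a b)
    (ha : a ∈ CX G X) : b ∈ CX G X := by
  obtain ⟨hGadj, M, hM, hedge⟩ := allowed_adj_iff.1 hab
  have hMadj : M.Adj a b := Subgraph.mem_edgeSet.1 hedge
  obtain ⟨hs1, _, _⟩ := pm_struct hB hM
  have haU : a ∉ X ∪ DX G X := ha
  intro hbU
  rcases hbU with hbX | hbD
  · obtain ⟨hy, ho⟩ := hs1 b hbX a hMadj.symm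
    exact haU (Or.inr ⟨hy, ho⟩)
  · obtain ⟨hbX, hob⟩ := hbD
    have hanX : a ∉ X := fun hax => haU (Or.inl hax)
    have haX : a ∈ Xᶜ := hanX
    have hcomp : (G.induce Xᶜ).connectedComponentMk ⟨a, haX⟩ =
        (G.induce Xᶜ).connectedComponentMk ⟨b, hbX⟩ :=
      ConnectedComponent.sound (Adj.reachable (by simpa using hGadj))
    have hoa : Odd ((G.induce Xᶜ).connectedComponentMk ⟨a, haX⟩).supp.ncard := by
      rw [hcomp]; exact hob
    exact haU (Or.inr ⟨haX, hoa⟩)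

lemma sameFC_cx (hB : IsBarrier G X) {a b : V} (h : SameFC G a b) (ha : a ∈ CX G X) :
    b ∈ CX G X := by
  obtain ⟨p⟩ := h
  induction p with
  | nil => exact ha
  | @cons u v w huv q ih => exact ih (cx_step hB huv ha)

end HMs
section Main1
open SimpleGraph
variable {V : Type*} [Fintype V] {G : SimpleGraph V} {X : Set V}

omit [Fintype V] in
lemma expansion_disjoint (c₁ c₂ : (allowedSubgraph (HGraph G X)).ConnectedComponent)
    (h : c₁ ≠ c₂) : Disjoint (expansionVerts G X c₁) (expansionVerts G X c₂) := by
  rw [Set.disjoint_left]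
  intro v h1 h2
  rw [mem_expansion_iff] at h1 h2
  obtain ⟨ha, hs1⟩ := h1
  obtain ⟨hb, hs2⟩ := h2
  rw [ConnectedComponent.mem_supp_iff] at hs1 hs2
  apply h
  rw [← hs1, ← hs2]

omit [Fintype V] in
lemma expansion_union :
    (⋃ c : (allowedSubgraph (HGraph G X)).ConnectedComponent, expansionVerts G X c) =
      X ∪ DX G X := by
  apply Set.eq_of_subset_of_subset
  · intro v hv
    rw [Set.mem_iUnion] at hv
    obtain ⟨cc, hvs⟩ := hv
    exact expansion_subset hvs
  · intro v hv
    rw [Set.mem_iUnion]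
    exact ⟨(allowedSubgraph (HGraph G X)).connectedComponentMk (pvf G X v hv),
      mem_expansion_iff.2 ⟨hv, rfl⟩⟩

lemma expansion_separating (hB : IsBarrier G X)
    (c : (allowedSubgraph (HGraph G X)).ConnectedComponent) :
    IsSeparating G (expansionVerts G X c) := by
  intro C hC
  obtain ⟨v, rfl⟩ := hC
  by_cases hdis : Disjoint {w | SameFC G v w} (expansionVerts G X c)
  · exact Or.inr hdis
  · left
    rw [Set.not_disjoint_iff] at hdis
    obtain ⟨w, hwC, hwE⟩ := hdis
    intro u huC
    have hwu : SameFC G w u := (Reachable.symm hwC).trans huC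
    rw [mem_expansion_iff] at hwE ⊢
    obtain ⟨hw, hs⟩ := hwE
    obtain ⟨hu, hr⟩ := sameFC_transport hB hwu hw
    refine ⟨hu, ?_⟩
    rw [ConnectedComponent.mem_supp_iff] at hs ⊢
    rw [← hs]
    exact (ConnectedComponent.sound hr).symm

lemma expansion_closure (hB : IsBarrier G X) {M : G.Subgraph} (hM : M.IsPerfectMatching)
    (c : (allowedSubgraph (HGraph G X)).ConnectedComponent) :
    ∀ v ∈ expansionVerts G X c, ∀ w, M.Adj v w → w ∈ expansionVerts G X c := by
  intro v hv w hvw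
  have hall : (allowedSubgraph G).Adj v w := pm_adj_allowed hM hvw
  rw [mem_expansion_iff] at hv ⊢
  obtain ⟨hvU, hs⟩ := hv
  obtain ⟨hwU, hr⟩ := allowed_step hB hall hvU
  refine ⟨hwU, ?_⟩
  rw [ConnectedComponent.mem_supp_iff] at hs ⊢
  rw [← hs]
  exact (ConnectedComponent.sound hr).symm

lemma expansion_factorizable (hG : Factorizable G) (hB : IsBarrier G X)
    (c : (allowedSubgraph (HGraph G X)).ConnectedComponent) :
    Factorizable (G.induce (expansionVerts G X c)) := by
  obtain ⟨M, hM⟩ := hG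
  have hclos := expansion_closure hB hM c
  refine ⟨{ verts := Set.univ, Adj := fun a b => M.Adj a.1 b.1,
            adj_sub := ?_, edge_vert := fun h => Set.mem_univ _,
            symm := ⟨fun a b h => h.symm⟩ }, ?_, fun a => Set.mem_univ _⟩
  · intro a b h
    simpa using M.adj_sub h
  · intro a _
    obtain ⟨w, hw, hu⟩ := hM.1 (hM.2 a.1)
    refine ⟨⟨w, hclos a.1 a.2 w hw⟩, hw, ?_⟩
    rintro ⟨y, hy⟩ hadj
    apply Subtype.ext
    exact hu y hadj

end Main1
section Main2
open SimpleGraph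
variable {V : Type*} [Fintype V] {G : SimpleGraph V} {X : Set V}

omit [Fintype V] in
lemma reach_induce_mono {A B : Set V} (hAB : A ⊆ B) {a b : ↥A}
    (h : (G.induce A).Reachable a b) :
    (G.induce B).Reachable ⟨a.1, hAB a.2⟩ ⟨b.1, hAB b.2⟩ := by
  obtain ⟨p⟩ := h
  exact reach_induce_of_forall _ _ p (fun u _ => hAB u.2)

omit [Fintype V] in
lemma vsuppE_iff {c : (allowedSubgraph (HGraph G X)).ConnectedComponent}
    (K : (G.induce Xᶜ).ConnectedComponent) :
    (∃ ho : Odd K.supp.ncard, Sum.inr ⟨K, ho⟩ ∈ c.supp) ↔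
      vsupp K ⊆ expansionVerts G X c ∩ Xᶜ := by
  constructor
  · rintro ⟨ho, hs⟩ v hv
    rw [mem_vsupp] at hv
    obtain ⟨hvX, hvc⟩ := hv
    subst hvc
    exact ⟨(mem_expansion_of_nmemX hvX).2 ⟨ho, hs⟩, hvX⟩
  · intro hsub
    obtain ⟨u, hu⟩ := K.exists_rep
    have huE : u.1 ∈ expansionVerts G X c ∩ Xᶜ := hsub ⟨u, by exact hu, rfl⟩
    obtain ⟨ho, hs⟩ := (mem_expansion_of_nmemX (show u.1 ∉ X from u.2)).1 huE.1
    have hK : (G.induce Xᶜ).connectedComponentMk ⟨u.1, u.2⟩ = K := hu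
    rw [← hK]
    exact ⟨ho, hs⟩

omit [Fintype V] in
lemma EXc_closed {c : (allowedSubgraph (HGraph G X)).ConnectedComponent} :
    ∀ u w : ↥(Xᶜ : Set V), u.1 ∈ expansionVerts G X c ∩ Xᶜ →
      (G.induce Xᶜ).connectedComponentMk u = (G.induce Xᶜ).connectedComponentMk w →
      w.1 ∈ expansionVerts G X c ∩ Xᶜ := by
  intro u w huE hcomp
  obtain ⟨ho, hs⟩ := (mem_expansion_of_nmemX (show u.1 ∉ X from u.2)).1 huE.1
  have hKu : (G.induce Xᶜ).connectedComponentMk ⟨u.1, u.2⟩ = (G.induce Xᶜ).connectedComponentMk u := rfl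
  have hv : vsupp ((G.induce Xᶜ).connectedComponentMk u) ⊆ expansionVerts G X c ∩ Xᶜ := by
    apply (vsuppE_iff _).1
    rw [← hKu] at hcomp ⊢
    exact ⟨ho, hs⟩
  apply hv
  rw [mem_vsupp]
  exact ⟨w.2, by rw [show (⟨w.1, w.2⟩ : ↥(Xᶜ : Set V)) = w from rfl]; exact hcomp.symm⟩

omit [Fintype V] in
lemma expansion_correspondence (c : (allowedSubgraph (HGraph G X)).ConnectedComponent) :
    ∃ Θ : OddCompT (G.induce (expansionVerts G X c)) (Subtype.val ⁻¹' X) ≃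
        {K : OddCompT G X // Sum.inr K ∈ c.supp},
      ∀ d, Subtype.val '' (Subtype.val '' d.1.supp) = vsupp (Θ d).1.1 := by
  classical
  set E := expansionVerts G X c with hE
  set A' : Set V := E ∩ Xᶜ with hA'
  obtain ⟨eA, heA⟩ := comp_corr (G := G) (A' := A') (A := Xᶜ) Set.inter_subset_right
    (fun u w hu hc => EXc_closed u w hu hc)
  let eS : {K : (G.induce Xᶜ).ConnectedComponent // vsupp K ⊆ A'} ≃
      {K : OddCompT G X // Sum.inr K ∈ c.supp} :=
    { toFun := fun K => ⟨⟨K.1, ((vsuppE_iff K.1).2 K.2).choose⟩,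
        ((vsuppE_iff K.1).2 K.2).choose_spec⟩
      invFun := fun s => ⟨s.1.1, (vsuppE_iff s.1.1).1 ⟨s.1.2, s.2⟩⟩
      left_inv := fun K => Subtype.ext rfl
      right_inv := fun s => Subtype.ext (Subtype.ext rfl) }
  let θ0 := eA.trans eS
  have hθ0 : ∀ d, vsupp (θ0 d).1.1 = vsupp d := fun d => heA d
  have hallodd : ∀ d : (G.induce A').ConnectedComponent, Odd d.supp.ncard := by
    intro d
    have h1 : d.supp.ncard = (θ0 d).1.1.supp.ncard := by
      rw [← vsupp_ncard d, ← hθ0 d, vsupp_ncard]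
    rw [h1]
    exact (θ0 d).1.2
  have hP : ∀ v, v ∈ A' ↔ ∃ h : v ∈ E, (⟨v, h⟩ : ↥E) ∈ ((Subtype.val ⁻¹' X : Set ↥E)ᶜ) := by
    intro v
    constructor
    · rintro ⟨h1, h2⟩
      exact ⟨h1, h2⟩
    · rintro ⟨h1, h2⟩
      exact ⟨h1, h2⟩
  let ι : (G.induce E).induce ((Subtype.val ⁻¹' X : Set ↥E)ᶜ) ≃g G.induce A' :=
    iInd E _ A' hP
  let ψ := isoCompEquiv ι
  have halloddS : ∀ d : ((G.induce E).induce ((Subtype.val ⁻¹' X : Set ↥E)ᶜ)).ConnectedComponent,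
      Odd d.supp.ncard := by
    intro d
    rw [← isoCompEquiv_supp_ncard ι d]
    exact hallodd (ψ d)
  let e1 : OddCompT (G.induce E) (Subtype.val ⁻¹' X) ≃
      ((G.induce E).induce ((Subtype.val ⁻¹' X : Set ↥E)ᶜ)).ConnectedComponent :=
    Equiv.subtypeUnivEquiv halloddS
  refine ⟨e1.trans (ψ.trans θ0), ?_⟩
  intro d
  have h1 : ((e1.trans (ψ.trans θ0)) d).1.1 = (θ0 (ψ d.1)).1.1 := rfl
  rw [h1, hθ0 (ψ d.1)]
  show Subtype.val '' (Subtype.val '' d.1.supp) = Subtype.val '' (ψ d.1).supp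
  rw [show (ψ d.1).supp = ⇑ι '' d.1.supp from isoCompEquiv_supp ι d.1]
  rw [Set.image_image, Set.image_image]
  rfl

end Main2
section Main3
open SimpleGraph
variable {V : Type*} [Fintype V] {G : SimpleGraph V} {X : Set V}

lemma card_Sr_eq (hB : IsBarrier G X) {M : G.Subgraph} (hM : M.IsPerfectMatching)
    (c : (allowedSubgraph (HGraph G X)).ConnectedComponent) :
    Nat.card {K : OddCompT G X // Sum.inr K ∈ c.supp} =
      Nat.card {x : ↥X // Sum.inl x ∈ c.supp} := by
  classical
  have hHM := HMsub_isPM hB hM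
  have hex : ∀ p : HVert G X, ∃! q, (HMsub G X M).Adj p q := fun p => hHM.1 (hHM.2 p)
  choose f hf hfu using hex
  have hff : ∀ p, f (f p) = p := fun p => (hfu (f p) p (hf p).symm).symm
  have hcomp : ∀ p, (allowedSubgraph (HGraph G X)).connectedComponentMk (f p) =
      (allowedSubgraph (HGraph G X)).connectedComponentMk p :=
    fun p => ConnectedComponent.sound (Adj.reachable (pm_adj_allowed hHM (hf p))).symm
  have hshape1 : ∀ x : ↥X, ∃ K : OddCompT G X, f (Sum.inl x) = Sum.inr K := by
    intro x
    obtain ⟨x', cc', y', _, _, hor⟩ := HMsub_adj_shape (hf (Sum.inl x))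
    rcases hor with ⟨h1, h2⟩ | ⟨h1, h2⟩
    · exact ⟨cc', h2⟩
    · exact absurd h1 (by simp)
  have hshape2 : ∀ K : OddCompT G X, ∃ x : ↥X, f (Sum.inr K) = Sum.inl x := by
    intro K
    obtain ⟨x', cc', y', _, _, hor⟩ := HMsub_adj_shape (hf (Sum.inr K))
    rcases hor with ⟨h1, h2⟩ | ⟨h1, h2⟩
    · exact absurd h1 (by simp)
    · exact ⟨x', h2⟩
  choose Kf hKf using hshape1
  choose xf hxf using hshape2
  symm
  apply Nat.card_eq_of_bijective (fun x => (⟨Kf x.1, by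
    have h1 : Sum.inr (Kf x.1) ∈ c.supp := by
      rw [ConnectedComponent.mem_supp_iff, ← hKf x.1, hcomp]
      exact x.2
    exact h1⟩ : {K : OddCompT G X // Sum.inr K ∈ c.supp}))
  constructor
  · rintro ⟨x, hx⟩ ⟨x', hx'⟩ h
    have h1 : Kf x = Kf x' := congrArg Subtype.val h
    have h2 : f (Sum.inl x) = f (Sum.inl x') := by rw [hKf x, hKf x', h1]
    have h3 : (Sum.inl x : HVert G X) = Sum.inl x' := by
      rw [← hff (Sum.inl x), ← hff (Sum.inl x'), h2]
    exact Subtype.ext (Sum.inl.inj h3)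
  · rintro ⟨K, hK⟩
    have hxK : Sum.inl (xf K) ∈ c.supp := by
      rw [ConnectedComponent.mem_supp_iff, ← hxf K, hcomp]
      exact hK
    refine ⟨⟨xf K, hxK⟩, ?_⟩
    apply Subtype.ext
    show Kf (xf K) = K
    have h1 : (Sum.inr (Kf (xf K)) : HVert G X) = Sum.inr K := by
      rw [← hKf (xf K), ← hxf K, hff]
    exact Sum.inr.inj h1

omit [Fintype V] in
lemma card_Sl_eq (c : (allowedSubgraph (HGraph G X)).ConnectedComponent) :
    Nat.card {x : ↥X // Sum.inl x ∈ c.supp} =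
      (Subtype.val ⁻¹' X : Set ↥(expansionVerts G X c)).ncard := by
  rw [← Nat.card_coe_set_eq]
  apply Nat.card_congr
  exact
    { toFun := fun x => ⟨⟨x.1.1, (mem_expansion_of_memX (c := c) x.1.2).2 x.2⟩, x.1.2⟩
      invFun := fun a => ⟨⟨a.1.1, (a.2 : a.1.1 ∈ X)⟩,
        (mem_expansion_of_memX (c := c) (a.2 : a.1.1 ∈ X)).1 a.1.2⟩

      left_inv := fun x => Subtype.ext (Subtype.ext rfl)
      right_inv := fun a => Subtype.ext (Subtype.ext rfl) }

lemma expansion_barrier (hB : IsBarrier G X) {M : G.Subgraph} (hM : M.IsPerfectMatching)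
    (c : (allowedSubgraph (HGraph G X)).ConnectedComponent) :
    IsBarrier (G.induce (expansionVerts G X c)) (Subtype.val ⁻¹' X) := by
  classical
  obtain ⟨Θ, hΘ⟩ := expansion_correspondence c
  show qG _ _ = _
  rw [qG_eq_card, Nat.card_congr Θ, card_Sr_eq hB hM c, card_Sl_eq c]

end Main3
section Main4
open SimpleGraph
variable {V : Type*} [Fintype V] {G : SimpleGraph V} {X : Set V}

omit [Fintype V] in
lemma vsupp_nonempty {A : Set V} (D : (G.induce A).ConnectedComponent) :
    (vsupp D).Nonempty := by
  obtain ⟨u, hu⟩ := D.exists_rep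
  exact ⟨u.1, ⟨u, by exact hu, rfl⟩⟩

lemma expansion_oddmax (hG : Factorizable G) (hX : IsOddMaximalBarrier G X)
    (c : (allowedSubgraph (HGraph G X)).ConnectedComponent) :
    IsOddMaximalBarrier (G.induce (expansionVerts G X c)) (Subtype.val ⁻¹' X) := by
  classical
  obtain ⟨hB, hmax⟩ := hX
  obtain ⟨M, hM⟩ := hG
  set E := expansionVerts G X c with hEdef
  refine ⟨expansion_barrier hB hM c, ?_⟩
  rintro Y' hY' hY'ne hbar'
  set Y : Set V := Subtype.val '' Y' with hYdef
  have hY'Xc : ∀ a : ↥E, a ∈ Y' → a.1 ∉ X := by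
    intro a ha
    obtain ⟨h1, _⟩ := hY' ha
    exact h1
  have hYE : Y ⊆ E ∩ Xᶜ := by
    rintro v ⟨a, ha, rfl⟩
    exact ⟨a.2, hY'Xc a ha⟩
  have hYDX : Y ⊆ DX G X := by
    intro v hv
    obtain ⟨hvE, hvX⟩ := hYE hv
    obtain ⟨ho, _⟩ := (mem_expansion_of_nmemX (show v ∉ X from hvX)).1 hvE
    exact ⟨hvX, ho⟩
  have hYne : Y.Nonempty := by
    obtain ⟨a, ha⟩ := hY'ne
    exact ⟨a.1, ⟨a, ha, rfl⟩⟩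
  apply hmax Y hYDX hYne
  show qG G (X ∪ Y) = (X ∪ Y).ncard
  set A' : Set V := (X ∪ Y)ᶜ with hA'def
  have hA'sub : A' ⊆ Xᶜ := fun v hv hx => hv (Or.inl hx)
  set P₁ : Set V := Xᶜ ∩ Eᶜ with hP₁def
  set P₂ : Set V := (E ∩ Xᶜ) \ Y with hP₂def
  have hP₁A' : P₁ ⊆ A' := by
    rintro v ⟨hv1, hv2⟩ (h | h)
    · exact hv1 h
    · exact hv2 (hYE h).1
  have hP₂A' : P₂ ⊆ A' := by
    rintro v ⟨⟨hvE, hvX⟩, hvY⟩ (h | h)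
    · exact hvX h
    · exact hvY h
  have hEcl : ∀ u w : ↥(Xᶜ : Set V), u.1 ∈ E ∩ Xᶜ →
      (G.induce Xᶜ).connectedComponentMk u = (G.induce Xᶜ).connectedComponentMk w →
      w.1 ∈ E ∩ Xᶜ := fun u w hu h => EXc_closed u w hu h
  have hlift : ∀ u w : ↥A',
      (G.induce A').connectedComponentMk u = (G.induce A').connectedComponentMk w →
      (G.induce Xᶜ).connectedComponentMk ⟨u.1, hA'sub u.2⟩ =
        (G.induce Xᶜ).connectedComponentMk ⟨w.1, hA'sub w.2⟩ := by
    intro u w h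
    exact ConnectedComponent.sound (reach_induce_mono hA'sub (ConnectedComponent.exact h))
  have hclP₁ : ∀ u w : ↥A', u.1 ∈ P₁ →
      (G.induce A').connectedComponentMk u = (G.induce A').connectedComponentMk w →
      w.1 ∈ P₁ := by
    intro u w hu h
    refine ⟨hA'sub w.2, ?_⟩
    intro hwE
    have := hEcl ⟨w.1, hA'sub w.2⟩ ⟨u.1, hA'sub u.2⟩ ⟨hwE, hA'sub w.2⟩ (hlift u w h).symm
    exact hu.2 this.1
  have hclP₂ : ∀ u w : ↥A', u.1 ∈ P₂ →
      (G.induce A').connectedComponentMk u = (G.induce A').connectedComponentMk w →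
      w.1 ∈ P₂ := by
    intro u w hu h
    have hwE := hEcl ⟨u.1, hA'sub u.2⟩ ⟨w.1, hA'sub w.2⟩ hu.1 (hlift u w h)
    exact ⟨hwE, fun hwY => w.2 (Or.inr hwY)⟩
  obtain ⟨e₁, he₁⟩ := comp_corr (G := G) (A' := P₁) (A := A') hP₁A' hclP₁
  obtain ⟨e₂, he₂⟩ := comp_corr (G := G) (A' := P₂) (A := A') hP₂A' hclP₂
  have hsplit : ∀ D : (G.induce A').ConnectedComponent, vsupp D ⊆ P₁ ∨ vsupp D ⊆ P₂ := by
    intro D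
    obtain ⟨u, hu⟩ := D.exists_rep
    by_cases huE : u.1 ∈ E
    · right
      intro v hv
      rw [mem_vsupp] at hv
      obtain ⟨hvA, hvc⟩ := hv
      refine hclP₂ u ⟨v, hvA⟩ ⟨⟨huE, hA'sub u.2⟩, fun hY2 => u.2 (Or.inr hY2)⟩ ?_
      rw [show ((G.induce A').connectedComponentMk u) = D from hu, hvc]
    · left
      intro v hv
      rw [mem_vsupp] at hv
      obtain ⟨hvA, hvc⟩ := hv
      refine hclP₁ u ⟨v, hvA⟩ ⟨hA'sub u.2, huE⟩ ?_
      rw [show ((G.induce A').connectedComponentMk u) = D from hu, hvc]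
  have hP₁P₂ : ∀ v, v ∈ P₁ → v ∈ P₂ → False := fun v h1 h2 => h1.2 h2.1.1
  let g : (G.induce P₁).ConnectedComponent ⊕ (G.induce P₂).ConnectedComponent →
      (G.induce A').ConnectedComponent := Sum.elim (fun d => (e₁ d).1) (fun d => (e₂ d).1)
  have hgbij : Function.Bijective g := by
    constructor
    · rintro (d | d) (d' | d') h
      · rw [e₁.injective (Subtype.ext h)]
      · exfalso
        obtain ⟨v, hv⟩ := vsupp_nonempty (e₁ d).1
        refine hP₁P₂ v ((e₁ d).2 hv) ((e₂ d').2 ?_)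
        rw [← show (e₁ d).1 = (e₂ d').1 from h]
        exact hv
      · exfalso
        obtain ⟨v, hv⟩ := vsupp_nonempty (e₂ d).1
        refine hP₁P₂ v ((e₁ d').2 ?_) ((e₂ d).2 hv)
        rw [← show (e₂ d).1 = (e₁ d').1 from h]
        exact hv
      · rw [e₂.injective (Subtype.ext h)]
    · intro D
      rcases hsplit D with h | h
      · exact ⟨Sum.inl (e₁.symm ⟨D, h⟩), by simp [g]⟩
      · exact ⟨Sum.inr (e₂.symm ⟨D, h⟩), by simp [g]⟩
  have hcount : qG G (X ∪ Y) =
      Nat.card {d : (G.induce P₁).ConnectedComponent // Odd d.supp.ncard} +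
      Nat.card {d : (G.induce P₂).ConnectedComponent // Odd d.supp.ncard} := by
    rw [qG_eq_card]
    have step1 : Nat.card (OddCompT G (X ∪ Y)) =
        Nat.card {z : (G.induce P₁).ConnectedComponent ⊕ (G.induce P₂).ConnectedComponent //
          Odd (g z).supp.ncard} :=
      Nat.card_congr (Equiv.subtypeEquiv (Equiv.ofBijective g hgbij) fun _ => Iff.rfl).symm
    rw [step1, Nat.card_congr (Equiv.subtypeSum (p := fun z => Odd (g z).supp.ncard)),
      Nat.card_sum]
    congr 1
    · apply Nat.card_congr
      refine Equiv.subtypeEquiv (Equiv.refl _) fun d => ?_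
      show Odd ((e₁ d).1).supp.ncard ↔ Odd d.supp.ncard
      rw [← vsupp_ncard, he₁ d, vsupp_ncard]
    · apply Nat.card_congr
      refine Equiv.subtypeEquiv (Equiv.refl _) fun d => ?_
      show Odd ((e₂ d).1).supp.ncard ↔ Odd d.supp.ncard
      rw [← vsupp_ncard, he₂ d, vsupp_ncard]
  have hclQ : ∀ u w : ↥(Xᶜ : Set V), u.1 ∈ P₁ →
      (G.induce Xᶜ).connectedComponentMk u = (G.induce Xᶜ).connectedComponentMk w →
      w.1 ∈ P₁ := by
    intro u w hu h
    refine ⟨w.2, fun hwE => ?_⟩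
    exact hu.2 (hEcl w u ⟨hwE, w.2⟩ h.symm).1
  obtain ⟨e₃, he₃⟩ := comp_corr (G := G) (A' := P₁) (A := Xᶜ) Set.inter_subset_left hclQ
  have hNP₁ : Nat.card {d : (G.induce P₁).ConnectedComponent // Odd d.supp.ncard} =
      Nat.card {K : OddCompT G X // Sum.inr K ∉ c.supp} := by
    have hodd3 : ∀ d : (G.induce P₁).ConnectedComponent,
        Odd d.supp.ncard ↔ Odd ((e₃ d).1).supp.ncard := by
      intro d
      rw [← vsupp_ncard, ← vsupp_ncard, he₃ d]
    apply Nat.card_eq_of_bijective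
      (fun d : {d : (G.induce P₁).ConnectedComponent // Odd d.supp.ncard} =>
        (⟨⟨(e₃ d.1).1, (hodd3 d.1).1 d.2⟩, by
          intro hin
          have hsubE : vsupp (e₃ d.1).1 ⊆ E ∩ Xᶜ := (vsuppE_iff _).1 ⟨(hodd3 d.1).1 d.2, hin⟩
          obtain ⟨v, hv⟩ := vsupp_nonempty (e₃ d.1).1
          exact ((e₃ d.1).2 hv).2 (hsubE hv).1⟩ :
          {K : OddCompT G X // Sum.inr K ∉ c.supp}))
    constructor
    · rintro ⟨d, hd⟩ ⟨d', hd'⟩ h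
      have h1 : (e₃ d).1 = (e₃ d').1 := congrArg (fun z => z.1.1) h
      exact Subtype.ext (e₃.injective (Subtype.ext h1))
    · rintro ⟨⟨K, ho⟩, hn⟩
      have hsub : vsupp K ⊆ P₁ := by
        intro v hv
        have hvX : v ∈ Xᶜ := vsupp_subset K hv
        refine ⟨hvX, fun hvE => ?_⟩
        rw [mem_vsupp] at hv
        obtain ⟨hvX', hvc⟩ := hv
        obtain ⟨ho', hs'⟩ := (mem_expansion_of_nmemX (show v ∉ X from hvX')).1 hvE
        have hex2 : ∃ ho2 : Odd K.supp.ncard, Sum.inr (⟨K, ho2⟩ : OddCompT G X) ∈ c.supp := by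
          rw [← hvc]
          exact ⟨ho', hs'⟩
        obtain ⟨ho2, hs2⟩ := hex2
        exact hn hs2
      have h5 : e₃ (e₃.symm ⟨K, hsub⟩) = ⟨K, hsub⟩ := Equiv.apply_symm_apply _ _
      refine ⟨⟨e₃.symm ⟨K, hsub⟩, ?_⟩, ?_⟩
      · rw [hodd3 (e₃.symm ⟨K, hsub⟩), h5]
        exact ho
      · apply Subtype.ext
        apply Subtype.ext
        show (e₃ (e₃.symm ⟨K, hsub⟩)).1 = K
        rw [h5]
  have hPiso : ∀ v, v ∈ P₂ ↔ ∃ h : v ∈ E,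
      (⟨v, h⟩ : ↥E) ∈ ((Subtype.val ⁻¹' X ∪ Y' : Set ↥E)ᶜ) := by
    intro v
    constructor
    · rintro ⟨⟨hvE, hvX⟩, hvY⟩
      refine ⟨hvE, ?_⟩
      rintro (h | h)
      · exact hvX h
      · exact hvY ⟨⟨v, hvE⟩, h, rfl⟩
    · rintro ⟨hvE, hcompl⟩
      refine ⟨⟨hvE, fun hx => hcompl (Or.inl hx)⟩, fun hvY => ?_⟩
      obtain ⟨a, haY, hav⟩ := hvY
      have ha : a = ⟨v, hvE⟩ := Subtype.ext hav
      exact hcompl (Or.inr (ha ▸ haY))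
  have hNP₂ : Nat.card {d : (G.induce P₂).ConnectedComponent // Odd d.supp.ncard} =
      (Subtype.val ⁻¹' X ∪ Y' : Set ↥E).ncard := by
    let ι₂ : (G.induce E).induce ((Subtype.val ⁻¹' X ∪ Y' : Set ↥E)ᶜ) ≃g G.induce P₂ :=
      iInd E _ P₂ hPiso
    have step : Nat.card (OddCompT (G.induce E) (Subtype.val ⁻¹' X ∪ Y')) =
        Nat.card {d : (G.induce P₂).ConnectedComponent // Odd d.supp.ncard} := by
      apply Nat.card_congr
      refine Equiv.subtypeEquiv (isoCompEquiv ι₂) fun d => ?_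
      rw [isoCompEquiv_supp_ncard]
    rw [← step, ← qG_eq_card]
    exact hbar'
  have hSr := card_Sr_eq hB hM c
  have hSl := card_Sl_eq c
  have hsplitOC : Nat.card (OddCompT G X) =
      Nat.card {K : OddCompT G X // Sum.inr K ∈ c.supp} +
      Nat.card {K : OddCompT G X // Sum.inr K ∉ c.supp} := by
    rw [← Nat.card_sum]
    exact (Nat.card_congr (Equiv.sumCompl (fun K => Sum.inr K ∈ c.supp))).symm
  have hqX : Nat.card (OddCompT G X) = X.ncard := by rw [← qG_eq_card]; exact hB
  have hdisjXY : Disjoint X Y := Set.disjoint_right.2 fun v hv => (hYE hv).2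
  have hXY : (X ∪ Y).ncard = X.ncard + Y.ncard :=
    Set.ncard_union_eq hdisjXY (Set.toFinite _) (Set.toFinite _)
  have hdisjX'Y' : Disjoint (Subtype.val ⁻¹' X : Set ↥E) Y' :=
    Set.disjoint_right.2 fun a ha => hY'Xc a ha
  have hX'Y' : (Subtype.val ⁻¹' X ∪ Y' : Set ↥E).ncard =
      (Subtype.val ⁻¹' X : Set ↥E).ncard + Y'.ncard :=
    Set.ncard_union_eq hdisjX'Y' (Set.toFinite _) (Set.toFinite _)
  have hYcard : Y.ncard = Y'.ncard := Set.ncard_image_of_injective _ Subtype.val_injective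
  rw [hcount, hNP₁, hNP₂, hX'Y', hXY, hYcard]
  omega
end Main4
section Main5
open SimpleGraph
variable {V : Type*} {G : SimpleGraph V} {X : Set V}

lemma HGraph_adj_inl_inr {W : Type*} {H : SimpleGraph W} {S : Set W} (x : ↥S)
    (K : OddCompT H S) :
    (HGraph H S).Adj (Sum.inl x) (Sum.inr K) ↔
      ∃ y : ↥(Sᶜ : Set W), (H.induce Sᶜ).connectedComponentMk y = K.1 ∧ H.Adj x.1 y.1 := by
  rw [HGraph, fromRel_adj]
  constructor
  · rintro ⟨hne, (⟨x₀, cc₀, y₀, h1, h2, h3, h4⟩ | ⟨x₀, cc₀, y₀, h1, h2, h3, h4⟩)⟩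
    · obtain rfl : x₀ = x := (Sum.inl.inj h1).symm
      obtain rfl : cc₀ = K := (Sum.inr.inj h2).symm
      exact ⟨y₀, h3, h4⟩
    · exact absurd h1 (by simp)
  · rintro ⟨y, h3, h4⟩
    exact ⟨by simp, Or.inl ⟨x, K, y, rfl, rfl, h3, h4⟩⟩

lemma HGraph_adj_inl_inl {W : Type*} {H : SimpleGraph W} {S : Set W} (x x' : ↥S) :
    ¬ (HGraph H S).Adj (Sum.inl x) (Sum.inl x') := by
  rw [HGraph, fromRel_adj]
  rintro ⟨hne, (⟨x₀, cc₀, y₀, h1, h2, h3, h4⟩ | ⟨x₀, cc₀, y₀, h1, h2, h3, h4⟩)⟩ <;>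
    exact absurd h2 (by simp)

lemma HGraph_adj_inr_inr {W : Type*} {H : SimpleGraph W} {S : Set W} (K K' : OddCompT H S) :
    ¬ (HGraph H S).Adj (Sum.inr K) (Sum.inr K') := by
  rw [HGraph, fromRel_adj]
  rintro ⟨hne, (⟨x₀, cc₀, y₀, h1, h2, h3, h4⟩ | ⟨x₀, cc₀, y₀, h1, h2, h3, h4⟩)⟩ <;>
    exact absurd h1 (by simp)

lemma expansion_iso (c : (allowedSubgraph (HGraph G X)).ConnectedComponent) :
    Nonempty ((HGraph (G.induce (expansionVerts G X c)) (Subtype.val ⁻¹' X)) ≃g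
      ((HGraph G X).induce c.supp)) := by
  classical
  set E := expansionVerts G X c with hEdef
  obtain ⟨Θ, hΘ⟩ := expansion_correspondence c
  let F : HVert (G.induce E) (Subtype.val ⁻¹' X) → ↥(c.supp) := fun p =>
    match p with
    | Sum.inl x => ⟨Sum.inl ⟨x.1.1, x.2⟩, (mem_expansion_of_memX (c := c) x.2).1 x.1.2⟩
    | Sum.inr d => ⟨Sum.inr (Θ d).1, (Θ d).2⟩
  have hF1 : ∀ x, (F (Sum.inl x)).1 = Sum.inl ⟨x.1.1, x.2⟩ := fun _ => rfl
  have hF2 : ∀ d, (F (Sum.inr d)).1 = Sum.inr (Θ d).1 := fun _ => rfl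
  have hFbij : Function.Bijective F := by
    constructor
    · rintro (x | d) (x' | d') h
      · have h1 := congrArg Subtype.val h
        rw [hF1, hF1] at h1
        have h2 := congrArg Subtype.val (Sum.inl.inj h1)
        exact congrArg Sum.inl (Subtype.ext (Subtype.ext h2))
      · exact absurd (congrArg Subtype.val h) (by simp [hF1, hF2])
      · exact absurd (congrArg Subtype.val h) (by simp [hF1, hF2])
      · have h1 := congrArg Subtype.val h
        rw [hF2, hF2] at h1
        have h2 : Θ d = Θ d' := Subtype.ext (Sum.inr.inj h1)
        exact congrArg Sum.inr (Θ.injective h2)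
    · rintro ⟨qv, hqs⟩
      rcases qv with z | K
      · have hzE : z.1 ∈ E := (mem_expansion_of_memX (c := c) z.2).2 hqs
        exact ⟨Sum.inl ⟨⟨z.1, hzE⟩, z.2⟩, Subtype.ext rfl⟩
      · obtain ⟨d, hd⟩ := Θ.surjective ⟨K, hqs⟩
        refine ⟨Sum.inr d, Subtype.ext ?_⟩
        rw [hF2]
        rw [hd]
  have hbridge : ∀ (x : ↥(Subtype.val ⁻¹' X : Set ↥E))
      (d : OddCompT (G.induce E) (Subtype.val ⁻¹' X)),
      (∃ y' : ↥((Subtype.val ⁻¹' X : Set ↥E)ᶜ),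
        ((G.induce E).induce ((Subtype.val ⁻¹' X : Set ↥E)ᶜ)).connectedComponentMk y' = d.1 ∧
        (G.induce E).Adj x.1 y'.1) ↔
      (∃ y : ↥(Xᶜ : Set V), (G.induce Xᶜ).connectedComponentMk y = (Θ d).1.1 ∧
        G.Adj x.1.1 y.1) := by
    intro x d
    constructor
    · rintro ⟨y', hy'c, hy'adj⟩
      have h1 : y'.1.1 ∈ Subtype.val '' (Subtype.val '' d.1.supp) :=
        ⟨y'.1, ⟨y', (ConnectedComponent.mem_supp_iff _ _).2 hy'c, rfl⟩, rfl⟩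
      rw [hΘ d] at h1
      obtain ⟨y, hy, hyv⟩ := h1
      refine ⟨y, (ConnectedComponent.mem_supp_iff _ _).1 hy, ?_⟩
      rw [hyv]
      simpa using hy'adj
    · rintro ⟨y, hyc, hyadj⟩
      have h1 : y.1 ∈ vsupp (Θ d).1.1 := ⟨y, (ConnectedComponent.mem_supp_iff _ _).2 hyc, rfl⟩
      rw [← hΘ d] at h1
      obtain ⟨ye, hye, hyev⟩ := h1
      obtain ⟨y', hy', hy'v⟩ := hye
      refine ⟨y', (ConnectedComponent.mem_supp_iff _ _).1 hy', ?_⟩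
      have h2 : y'.1.1 = y.1 := by rw [congrArg Subtype.val hy'v, hyev]
      have h3 : G.Adj x.1.1 y'.1.1 := by rw [h2]; exact hyadj
      simpa using h3
  have hindadj : ∀ a b : ↥(c.supp),
      ((HGraph G X).induce c.supp).Adj a b ↔ (HGraph G X).Adj a.1 b.1 := by
    intro a b; simp
  refine ⟨{ toEquiv := Equiv.ofBijective F hFbij, map_rel_iff' := ?_ }⟩
  intro p q
  show ((HGraph G X).induce c.supp).Adj (F p) (F q) ↔ _
  rw [hindadj]
  rcases p with x | d <;> rcases q with x' | d'
  · rw [hF1, hF1]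
    exact iff_of_false (HGraph_adj_inl_inl _ _) (HGraph_adj_inl_inl _ _)
  · rw [hF1, hF2]
    rw [HGraph_adj_inl_inr, HGraph_adj_inl_inr]
    exact (hbridge x d').symm
  · rw [hF2, hF1]
    rw [SimpleGraph.adj_comm, SimpleGraph.adj_comm (HGraph (G.induce E) _)]
    rw [HGraph_adj_inl_inr, HGraph_adj_inl_inr]
    exact (hbridge x' d).symm
  · rw [hF2, hF2]
    exact iff_of_false (HGraph_adj_inr_inr _ _) (HGraph_adj_inr_inr _ _)

end Main5

theorem stmt7 {V : Type*} [Fintype V] (G : SimpleGraph V) (hG : Factorizable G)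
    (X : Set V) (hX : IsOddMaximalBarrier G X) :
    (∀ c₁ c₂ : (allowedSubgraph (HGraph G X)).ConnectedComponent, c₁ ≠ c₂ →
      Disjoint (expansionVerts G X c₁) (expansionVerts G X c₂)) ∧
    (⋃ c : (allowedSubgraph (HGraph G X)).ConnectedComponent,
      expansionVerts G X c) = X ∪ DX G X ∧
    (∀ c : (allowedSubgraph (HGraph G X)).ConnectedComponent,
      IsSeparating G (expansionVerts G X c) ∧
      Factorizable (G.induce (expansionVerts G X c))) ∧
    (∀ c : (allowedSubgraph (HGraph G X)).ConnectedComponent,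
      IsOddMaximalBarrier (G.induce (expansionVerts G X c))
        (Subtype.val ⁻¹' X)) ∧
    (∀ c : (allowedSubgraph (HGraph G X)).ConnectedComponent,
      Nonempty
        ((HGraph (G.induce (expansionVerts G X c)) (Subtype.val ⁻¹' X)) ≃g
          ((HGraph G X).induce c.supp))) := by
  classical
  obtain ⟨hB, hmax⟩ := hX
  refine ⟨expansion_disjoint, expansion_union, fun c => ⟨expansion_separating hB c,
    expansion_factorizable hG hB c⟩, fun c => expansion_oddmax hG ⟨hB, hmax⟩ c,
    fun c => expansion_iso c⟩
end

section
/- Let G be a factorizable graph, X an odd-maximal barrier of G, and M a perfect matching of G. Let D̂_1 and D̂_2 be the expansions of DM-components D_1 and D_2 of H_X(G) with D_1 ⪯ D_2. Then for any u ∈ X ∩ V(D̂_1) and w ∈ V(D̂_2) \ X, every M-saturated path P between u and w traverses X ∩ V(D̂_2), i.e., contains a vertex of X ∩ V(D̂_2). -/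
open SimpleGraph

section Aux
open SimpleGraph
namespace StmtAux

variable {V : Type*} {G : SimpleGraph V}

theorem edges_get_eq {u v : V} (p : G.Walk u v) :
    ∀ (i : ℕ) (h : i < p.edges.length),
      p.edges.get ⟨i, h⟩ = s(p.getVert i, p.getVert (i+1)) := by
  induction p with
  | nil => intro i h; simp at h
  | cons hadj q ih =>
    intro i h
    cases i with
    | zero => simp [SimpleGraph.Walk.getVert_cons_succ, SimpleGraph.Walk.getVert_zero]
    | succ j =>
      simp only [SimpleGraph.Walk.edges_cons, List.get_cons_succ,
        SimpleGraph.Walk.getVert_cons_succ]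
      exact ih j _

theorem getVert_mem_support {u v : V} (p : G.Walk u v) (i : ℕ) :
    p.getVert i ∈ p.support := by
  induction p generalizing i with
  | nil => cases i <;> simp [SimpleGraph.Walk.getVert]
  | cons hadj q ih =>
    cases i with
    | zero => simp [SimpleGraph.Walk.getVert_zero]
    | succ j =>
      rw [SimpleGraph.Walk.getVert_cons_succ]
      simp only [SimpleGraph.Walk.support_cons, List.mem_cons]
      exact Or.inr (ih j)

theorem getVert_inj {u v : V} (p : G.Walk u v) (hp : p.IsPath) :
    ∀ i j, i ≤ p.length → j ≤ p.length → p.getVert i = p.getVert j → i = j := by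
  induction p with
  | nil => intro i j hi hj _; simp at hi hj; omega
  | cons hadj q ih =>
    intro i j hi hj hij
    have hq := hp.of_cons
    have hns := (SimpleGraph.Walk.cons_isPath_iff _ _).1 hp |>.2
    cases i with
    | zero =>
      cases j with
      | zero => rfl
      | succ j' =>
        exfalso
        rw [SimpleGraph.Walk.getVert_zero, SimpleGraph.Walk.getVert_cons_succ] at hij
        exact hns (hij ▸ getVert_mem_support q j')
    | succ i' =>
      cases j with
      | zero =>
        exfalso
        rw [SimpleGraph.Walk.getVert_zero, SimpleGraph.Walk.getVert_cons_succ] at hij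
        exact hns (hij ▸ getVert_mem_support q i')
      | succ j' =>
        rw [SimpleGraph.Walk.getVert_cons_succ, SimpleGraph.Walk.getVert_cons_succ] at hij
        simp only [SimpleGraph.Walk.length_cons, Nat.succ_le_succ_iff] at hi hj
        exact congrArg Nat.succ (ih hq i' j' hi hj hij)

/-- The vertex set (in `V`) of a connected component of `G - X`. -/
def compSet (G : SimpleGraph V) (X : Set V) (K : (G.induce Xᶜ).ConnectedComponent) : Set V :=
  {v | ∃ h : v ∈ Xᶜ, (G.induce Xᶜ).connectedComponentMk ⟨v, h⟩ = K}

variable {X : Set V} {M : SimpleGraph.Subgraph G}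

theorem compSet_subset (K : (G.induce Xᶜ).ConnectedComponent) : compSet G X K ⊆ Xᶜ :=
  fun _ hv => hv.1

theorem mem_compSet_self {y : V} (hy : y ∈ Xᶜ) :
    y ∈ compSet G X ((G.induce Xᶜ).connectedComponentMk ⟨y, hy⟩) := ⟨hy, rfl⟩

theorem adj_compSet {K : (G.induce Xᶜ).ConnectedComponent} {v y : V}
    (hv : v ∈ compSet G X K) (hadj : G.Adj v y) (hy : y ∈ Xᶜ) : y ∈ compSet G X K := by
  obtain ⟨hvX, hvK⟩ := hv
  refine ⟨hy, ?_⟩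
  rw [← hvK]
  exact SimpleGraph.ConnectedComponent.connectedComponentMk_eq_of_adj
    (by simpa [SimpleGraph.comap_adj] using hadj.symm)

theorem compSet_eq_image (K : (G.induce Xᶜ).ConnectedComponent) :
    compSet G X K = Subtype.val '' K.supp := by
  ext v
  constructor
  · rintro ⟨h, hK⟩
    exact ⟨⟨v, h⟩, by simpa [SimpleGraph.ConnectedComponent.mem_supp_iff] using hK, rfl⟩
  · rintro ⟨⟨a, ha⟩, haK, rfl⟩
    exact ⟨ha, by simpa [SimpleGraph.ConnectedComponent.mem_supp_iff] using haK⟩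

theorem ncard_compSet (K : (G.induce Xᶜ).ConnectedComponent) :
    (compSet G X K).ncard = K.supp.ncard := by
  rw [compSet_eq_image, Set.ncard_image_of_injective _ Subtype.val_injective]

theorem exists_matched_to_X [Fintype V] (hM : M.IsPerfectMatching)
    (K : (G.induce Xᶜ).ConnectedComponent) (hK : Odd K.supp.ncard) :
    ∃ x, x ∈ X ∧ ∃ y, M.Adj x y ∧ y ∈ compSet G X K := by
  classical
  by_contra hcon
  push_neg at hcon
  have hMM := (SimpleGraph.Subgraph.isPerfectMatching_iff).1 hM
  -- every vertex of the component is matched inside the component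
  have hin : ∀ v ∈ compSet G X K, ∀ w, M.Adj v w → w ∈ compSet G X K := by
    intro v hv w hvw
    have hwX : w ∈ Xᶜ := fun hwmem => hcon w hwmem v hvw.symm hv
    exact adj_compSet hv (M.adj_sub hvw) hwX
  -- the matching restricted to the component
  set N : SimpleGraph.Subgraph G :=
    { verts := compSet G X K
      Adj := fun a b => M.Adj a b ∧ a ∈ compSet G X K ∧ b ∈ compSet G X K
      adj_sub := fun h => M.adj_sub h.1
      edge_vert := fun h => h.2.1
      symm := ⟨fun a b h => ⟨h.1.symm, h.2.2, h.2.1⟩⟩ } with hN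
  have hNm : N.IsMatching := by
    intro v hv
    obtain ⟨w, hw, huniq⟩ := hMM v
    refine ⟨w, ⟨hw, hv, hin v hv w hw⟩, fun y hy => huniq y hy.1⟩
  haveI : Fintype ↥N.verts := Fintype.ofFinite _
  have heven : Even N.verts.toFinset.card := hNm.even_card
  rw [← Set.ncard_eq_toFinset_card'] at heven
  have : N.verts.ncard = K.supp.ncard := ncard_compSet K
  rw [this] at heven
  exact (Nat.not_even_iff_odd.2 hK) heven

theorem matched_structure [Fintype V] (hM : M.IsPerfectMatching) (hB : IsBarrier G X) :
    (∀ x ∈ X, ∃ y, ∃ hy : y ∈ Xᶜ,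
        Odd ((G.induce Xᶜ).connectedComponentMk ⟨y, hy⟩).supp.ncard ∧ M.Adj x y)
    ∧ (∀ c : OddCompT G X, ∃ x, ∃ hx : x ∈ X, ∃ y, M.Adj x y ∧ y ∈ compSet G X c.1)
    ∧ (∀ x ∈ X, ∀ x' ∈ X, ∀ (y y' : V) (hy : y ∈ Xᶜ) (hy' : y' ∈ Xᶜ),
        M.Adj x y → M.Adj x' y' →
        (G.induce Xᶜ).connectedComponentMk ⟨y, hy⟩ =
          (G.induce Xᶜ).connectedComponentMk ⟨y', hy'⟩ →
        x = x') := by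
  classical
  have hMM := (SimpleGraph.Subgraph.isPerfectMatching_iff).1 hM
  choose xf hxfX yf hxy hyc using
    (fun c : OddCompT G X => exists_matched_to_X (X := X) hM c.1 c.2)
  have ginj : Function.Injective (fun c : OddCompT G X => (⟨xf c, hxfX c⟩ : ↥X)) := by
    intro c c' h
    simp only [Subtype.mk.injEq] at h
    have hyy : yf c = yf c' := by
      have h1 := hxy c
      rw [h] at h1
      exact (hMM (xf c')).unique h1 (hxy c')
    obtain ⟨hm, hk⟩ := hyc c
    obtain ⟨hm', hk'⟩ := hyc c'
    apply Subtype.ext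
    rw [← hk, ← hk']
    congr 1
    exact Subtype.ext hyy
  have hcard : Nat.card (OddCompT G X) = Nat.card ↥X := by
    have h1 : Nat.card (OddCompT G X) = qG G X := by
      rw [qG, ← Nat.card_coe_set_eq]
      rfl
    rw [h1, hB, ← Nat.card_coe_set_eq]
  have gbij := (Nat.bijective_iff_injective_and_card
      (fun c : OddCompT G X => (⟨xf c, hxfX c⟩ : ↥X))).2 ⟨ginj, hcard⟩
  have hsurj : ∀ x, ∀ hx : x ∈ X, ∃ c : OddCompT G X, xf c = x := by
    intro x hx
    obtain ⟨c, hc⟩ := gbij.2 ⟨x, hx⟩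
    exact ⟨c, congrArg Subtype.val hc⟩
  refine ⟨?_, fun c => ⟨xf c, hxfX c, yf c, hxy c, hyc c⟩, ?_⟩
  · intro x hx
    obtain ⟨c, hc⟩ := hsurj x hx
    obtain ⟨hm, hk⟩ := hyc c
    refine ⟨yf c, hm, ?_, by rw [← hc]; exact hxy c⟩
    rw [hk]; exact c.2
  · intro x hx x' hx' y y' hy hy' hxyadj hxy'adj hcomp
    obtain ⟨c, hc⟩ := hsurj x hx
    obtain ⟨c', hc'⟩ := hsurj x' hx'
    have hyyc : y = yf c := by
      have h1 := hxy c; rw [hc] at h1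
      exact (hMM x).unique hxyadj h1
    have hyyc' : y' = yf c' := by
      have h1 := hxy c'; rw [hc'] at h1
      exact (hMM x').unique hxy'adj h1
    obtain ⟨hm, hk⟩ := hyc c
    obtain ⟨hm', hk'⟩ := hyc c'
    have hcc : c = c' := by
      apply Subtype.ext
      rw [← hk, ← hk']
      have e1 : (⟨yf c, hm⟩ : ↥(Xᶜ : Set V)) = ⟨y, hy⟩ := Subtype.ext hyyc.symm
      have e2 : (⟨yf c', hm'⟩ : ↥(Xᶜ : Set V)) = ⟨y', hy'⟩ := Subtype.ext hyyc'.symm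
      rw [e1, e2, hcomp]
    rw [← hc, ← hc', hcc]

theorem no_M_edge_in_X [Fintype V] (hM : M.IsPerfectMatching) (hB : IsBarrier G X)
    {x x' : V} (hx : x ∈ X) (hx' : x' ∈ X) (hadj : M.Adj x x') : False := by
  obtain ⟨y, hy, _, hxy⟩ := (matched_structure hM hB).1 x hx
  have hMM := (SimpleGraph.Subgraph.isPerfectMatching_iff).1 hM
  have : x' = y := (hMM x).unique hadj hxy
  exact hy (this ▸ hx')

theorem mk_inl_eq_mk_inr [Fintype V] (hM : M.IsPerfectMatching) (hB : IsBarrier G X)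
    {x y : V} (hx : x ∈ X) (hy : y ∈ Xᶜ)
    (ho : Odd ((G.induce Xᶜ).connectedComponentMk ⟨y, hy⟩).supp.ncard)
    (hadj : M.Adj x y) :
    (allowedSubgraph (HGraph G X)).connectedComponentMk (Sum.inl ⟨x, hx⟩)
      = (allowedSubgraph (HGraph G X)).connectedComponentMk
          (Sum.inr ⟨(G.induce Xᶜ).connectedComponentMk ⟨y, hy⟩, ho⟩) := by
  classical
  obtain ⟨ha, h3, hb⟩ := matched_structure hM hB
  have hMM := (SimpleGraph.Subgraph.isPerfectMatching_iff).1 hM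
  set N : SimpleGraph.Subgraph (HGraph G X) :=
    { verts := Set.univ
      Adj := fun a b => ∃ (x0 : {x : V // x ∈ X}) (c : OddCompT G X) (y0 : (Xᶜ : Set V)),
        (G.induce Xᶜ).connectedComponentMk y0 = c.1 ∧ M.Adj x0.1 y0.1 ∧
        ((a = Sum.inl x0 ∧ b = Sum.inr c) ∨ (a = Sum.inr c ∧ b = Sum.inl x0))
      adj_sub := by
        rintro a b ⟨x0, c, y0, hc, hadj0, (⟨rfl, rfl⟩ | ⟨rfl, rfl⟩)⟩
        · rw [HGraph, SimpleGraph.fromRel_adj]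
          exact ⟨by simp, Or.inl ⟨x0, c, y0, rfl, rfl, hc, M.adj_sub hadj0⟩⟩
        · rw [HGraph, SimpleGraph.fromRel_adj]
          exact ⟨by simp, Or.inr ⟨x0, c, y0, rfl, rfl, hc, M.adj_sub hadj0⟩⟩
      edge_vert := fun _ => Set.mem_univ _
      symm := by
        constructor
        rintro a b ⟨x0, c, y0, hc, hadj0, (⟨rfl, rfl⟩ | ⟨rfl, rfl⟩)⟩
        · exact ⟨x0, c, y0, hc, hadj0, Or.inr ⟨rfl, rfl⟩⟩
        · exact ⟨x0, c, y0, hc, hadj0, Or.inl ⟨rfl, rfl⟩⟩ } with hNdef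
  have hNpm : N.IsPerfectMatching := by
    constructor
    · rintro a -
      match a with
      | Sum.inl x0 =>
        obtain ⟨y0, hy0, ho0, hadj0⟩ := ha x0.1 x0.2
        refine ⟨Sum.inr ⟨(G.induce Xᶜ).connectedComponentMk ⟨y0, hy0⟩, ho0⟩,
          ⟨x0, _, ⟨y0, hy0⟩, rfl, hadj0, Or.inl ⟨rfl, rfl⟩⟩, ?_⟩
        rintro b ⟨x1, c1, y1, hc1, hadj1, (⟨hEq, rfl⟩ | ⟨hEq, rfl⟩)⟩
        · have hx1 : x1 = x0 := (Sum.inl.inj hEq).symm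
          subst hx1
          have : y1.1 = y0 := (hMM x1.1).unique hadj1 hadj0
          have hy1 : y1 = ⟨y0, hy0⟩ := Subtype.ext this
          subst hy1
          congr 1
          exact Subtype.ext hc1.symm
        · exact absurd hEq (by simp)
      | Sum.inr c =>
        obtain ⟨x1, hx1, y1, hadj1, hm, hk⟩ := h3 c
        refine ⟨Sum.inl ⟨x1, hx1⟩,
          ⟨⟨x1, hx1⟩, c, ⟨y1, hm⟩, hk, hadj1, Or.inr ⟨rfl, rfl⟩⟩, ?_⟩
        rintro b ⟨x2, c2, y2, hc2, hadj2, (⟨hEq, rfl⟩ | ⟨hEq, rfl⟩)⟩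
        · exact absurd hEq (by simp)
        · have hcc : c2 = c := (Sum.inr.inj hEq).symm
          subst hcc
          have : x2.1 = x1 :=
            hb x2.1 x2.2 x1 hx1 y2.1 y1 y2.2 hm hadj2 hadj1 (by
              rw [Subtype.coe_eta, hc2, ← hk])
          congr 1
          exact Subtype.ext this
    · intro a
      exact Set.mem_univ a
  have hNadj : N.Adj (Sum.inl ⟨x, hx⟩)
      (Sum.inr ⟨(G.induce Xᶜ).connectedComponentMk ⟨y, hy⟩, ho⟩) :=
    ⟨⟨x, hx⟩, ⟨(G.induce Xᶜ).connectedComponentMk ⟨y, hy⟩, ho⟩, ⟨y, hy⟩, rfl, hadj,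
      Or.inl ⟨rfl, rfl⟩⟩
  have hHadj := N.adj_sub hNadj
  have hAllowed : Allowed (HGraph G X)
      s(Sum.inl ⟨x, hx⟩, Sum.inr ⟨(G.induce Xᶜ).connectedComponentMk ⟨y, hy⟩, ho⟩) :=
    ⟨N, hNpm, (SimpleGraph.Subgraph.mem_edgeSet).2 hNadj⟩
  have hadj2 : (allowedSubgraph (HGraph G X)).Adj (Sum.inl ⟨x, hx⟩)
      (Sum.inr ⟨(G.induce Xᶜ).connectedComponentMk ⟨y, hy⟩, ho⟩) := by
    rw [allowedSubgraph, SimpleGraph.fromEdgeSet_adj]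
    exact ⟨⟨(SimpleGraph.mem_edgeSet _).2 hHadj, hAllowed⟩, by simp⟩
  exact SimpleGraph.ConnectedComponent.connectedComponentMk_eq_of_adj hadj2.symm |>.symm

end StmtAux
end Aux

theorem stmt9 {V : Type*} [Fintype V] (G : SimpleGraph V) (hG : Factorizable G)
    (X : Set V) (hX : IsOddMaximalBarrier G X)
    (M : SimpleGraph.Subgraph G) (hM : M.IsPerfectMatching)
    (c d : (allowedSubgraph (HGraph G X)).ConnectedComponent)
    (hcd : dmLE (HGraph G X) (Set.range (Sum.inl : {x : V // x ∈ X} → HVert G X)) c d)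
    (u : V) (hu : u ∈ X ∩ expansionVerts G X c)
    (w : V) (hw : w ∈ expansionVerts G X d \ X)
    (p : G.Walk u w) (hp : IsSaturatedPath M.edgeSet p) :
    ∃ z ∈ p.support, z ∈ X ∩ expansionVerts G X d := by
  classical
  obtain ⟨hpath, hodd, halt⟩ := hp
  obtain ⟨hB, -⟩ := hX
  obtain ⟨hstr1, hstr2, hstr3⟩ := StmtAux.matched_structure hM hB
  have hMM := (SimpleGraph.Subgraph.isPerfectMatching_iff).1 hM
  set n := p.length with hn
  have hXu : u ∈ X := hu.1
  obtain ⟨hwE, hwX⟩ := hw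
  have hwc : ∃ (h : w ∈ Xᶜ)
      (ho : Odd ((G.induce Xᶜ).connectedComponentMk ⟨w, h⟩).supp.ncard),
      Sum.inr ⟨(G.induce Xᶜ).connectedComponentMk ⟨w, h⟩, ho⟩ ∈ d.supp := by
    rcases hwE with ⟨h, -⟩ | h
    · exact absurd h hwX
    · exact h
  obtain ⟨hwcm, hwo, hwsupp⟩ := hwc
  have hedge : ∀ i, i < n → (s(p.getVert i, p.getVert (i+1)) ∈ M.edgeSet ↔ Even i) := by
    intro i hi
    have hlen : i < p.edges.length := by rw [p.length_edges]; exact hi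
    have := halt i hlen
    rwa [StmtAux.edges_get_eq p i hlen] at this
  have hMadj : ∀ i, i < n → Even i → M.Adj (p.getVert i) (p.getVert (i+1)) := by
    intro i hi he
    exact (SimpleGraph.Subgraph.mem_edgeSet).1 ((hedge i hi).2 he)
  -- Key claim: no vertex of X appears at an odd position of the path.
  have hnoP : ∀ j, j ≤ n → p.getVert j ∈ X → ¬ Odd j := by
    by_contra hcon
    push_neg at hcon
    obtain ⟨j0, hj0⟩ := hcon
    have hex : ∃ j, j ≤ n ∧ p.getVert j ∈ X ∧ Odd j := ⟨j0, hj0⟩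
    obtain ⟨hjn, hjX, hjodd⟩ := Nat.find_spec hex
    set j := Nat.find hex with hjdef
    have hj1 : 1 ≤ j := by rcases hjodd with ⟨k, hk⟩; omega
    have hprev : Even (j - 1) := by rcases hjodd with ⟨k, hk⟩; exact ⟨k, by omega⟩
    have hjm1 : j - 1 < n := by omega
    have hMe : M.Adj (p.getVert (j-1)) (p.getVert j) := by
      have := hMadj (j-1) hjm1 hprev
      rwa [Nat.sub_add_cancel hj1] at this
    have hy1 : p.getVert (j-1) ∈ Xᶜ := by
      intro hmem
      exact StmtAux.no_M_edge_in_X hM hB hmem hjX hMe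
    set K := (G.induce Xᶜ).connectedComponentMk ⟨p.getVert (j-1), hy1⟩ with hK
    have hKodd : Odd K.supp.ncard := by
      obtain ⟨y, hy, ho, hadjy⟩ := hstr1 (p.getVert j) hjX
      have hval : p.getVert (j-1) = y := (hMM (p.getVert j)).unique hMe.symm hadjy
      have : (⟨p.getVert (j-1), hy1⟩ : ↥(Xᶜ : Set V)) = ⟨y, hy⟩ := Subtype.ext hval
      rw [hK, this]
      exact ho
    have h0T : p.getVert 0 ∉ StmtAux.compSet G X K := by
      rw [p.getVert_zero]
      intro hmem
      exact hmem.1 hXu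
    set T := (Finset.range j).filter (fun i => p.getVert i ∉ StmtAux.compSet G X K) with hT
    have hTne : T.Nonempty := by
      refine ⟨0, ?_⟩
      rw [hT, Finset.mem_filter, Finset.mem_range]
      exact ⟨by omega, h0T⟩
    set i := T.max' hTne with hi
    have hiT := T.max'_mem hTne
    have hij : i < j := Finset.mem_range.1 (Finset.mem_filter.1 hiT).1
    have hiK : p.getVert i ∉ StmtAux.compSet G X K := (Finset.mem_filter.1 hiT).2
    have hifull : ∀ t, i < t → t < j → p.getVert t ∈ StmtAux.compSet G X K := by
      intro t ht1 ht2
      by_contra hnot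
      have hmem : t ∈ T := by
        rw [hT, Finset.mem_filter, Finset.mem_range]
        exact ⟨ht2, hnot⟩
      have := T.le_max' t hmem
      omega
    have hisucc : i + 1 < j := by
      rcases Nat.lt_or_ge (i+1) j with h | h
      · exact h
      · exfalso
        have hieq : i = j - 1 := by omega
        apply hiK
        rw [hieq]
        exact ⟨hy1, rfl⟩
    have hiK1 : p.getVert (i+1) ∈ StmtAux.compSet G X K := hifull (i+1) (by omega) hisucc
    have hadji : G.Adj (p.getVert i) (p.getVert (i+1)) := p.adj_getVert_succ (by omega)
    have hiX : p.getVert i ∈ X := by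
      by_contra hnot
      exact hiK (StmtAux.adj_compSet hiK1 hadji.symm hnot)
    rcases Nat.even_or_odd i with hieven | hiodd
    · have hMi : M.Adj (p.getVert i) (p.getVert (i+1)) := hMadj i (by omega) hieven
      obtain ⟨hm1, hk1⟩ := hiK1
      have heq : p.getVert i = p.getVert j :=
        hstr3 _ hiX _ hjX _ _ hm1 hy1 hMi hMe.symm (by rw [hk1, hK])
      have : i = j := StmtAux.getVert_inj p hpath i j (by omega) hjn heq
      omega
    · have hmin : ¬ (i ≤ n ∧ p.getVert i ∈ X ∧ Odd i) := Nat.find_min hex (by omega)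
      exact hmin ⟨by omega, hiX, hiodd⟩
  -- Take the last vertex of the path lying in X.
  set T2 := (Finset.range (n+1)).filter (fun i => p.getVert i ∈ X) with hT2
  have hT2ne : T2.Nonempty := by
    refine ⟨0, ?_⟩
    rw [hT2, Finset.mem_filter, Finset.mem_range]
    refine ⟨by omega, ?_⟩
    rw [p.getVert_zero]; exact hXu
  set m := T2.max' hT2ne with hm
  have hmT := T2.max'_mem hT2ne
  have hmn' : m < n + 1 := Finset.mem_range.1 (Finset.mem_filter.1 hmT).1
  have hmX : p.getVert m ∈ X := (Finset.mem_filter.1 hmT).2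
  have hmn : m ≤ n := by omega
  have hvaln : p.getVert n = w := by rw [hn]; exact p.getVert_length
  have hmne : m ≠ n := by
    intro h
    apply hwX
    rw [← hvaln, ← h]
    exact hmX
  have hmlt : m < n := by omega
  have hmeven : Even m := by
    rcases Nat.even_or_odd m with h | h
    · exact h
    · exact absurd h (hnoP m hmn hmX)
  have hMm : M.Adj (p.getVert m) (p.getVert (m+1)) := hMadj m hmlt hmeven
  have hafter : ∀ t, m < t → t ≤ n → p.getVert t ∈ Xᶜ := by
    intro t ht1 ht2
    intro hmem
    have hmemT : t ∈ T2 := by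
      rw [hT2, Finset.mem_filter, Finset.mem_range]
      exact ⟨by omega, hmem⟩
    have := T2.le_max' t hmemT
    omega
  have hc1 : p.getVert (m+1) ∈ Xᶜ := hafter (m+1) (by omega) (by omega)
  have hchain : ∀ s : ℕ, m + 1 + s ≤ n →
      ∃ hc : p.getVert (m+1+s) ∈ Xᶜ,
        (G.induce Xᶜ).connectedComponentMk ⟨p.getVert (m+1+s), hc⟩ =
          (G.induce Xᶜ).connectedComponentMk ⟨p.getVert (m+1), hc1⟩ := by
    intro s
    induction s with
    | zero => intro h; exact ⟨hc1, rfl⟩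
    | succ s ih =>
      intro h
      obtain ⟨hc, hcomp⟩ := ih (by omega)
      have hc2 : p.getVert (m+1+(s+1)) ∈ Xᶜ := hafter _ (by omega) (by omega)
      refine ⟨hc2, ?_⟩
      rw [← hcomp]
      apply SimpleGraph.ConnectedComponent.connectedComponentMk_eq_of_adj
      have hadj : G.Adj (p.getVert (m+1+s)) (p.getVert (m+1+s+1)) :=
        p.adj_getVert_succ (by omega)
      show (G.induce Xᶜ).Adj _ _
      exact hadj.symm
  obtain ⟨hcw, hw2⟩ := hchain (n - (m+1)) (by omega)
  have hvalend : p.getVert (m+1+(n-(m+1))) = w := by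
    have : m+1+(n-(m+1)) = n := by omega
    rw [this]; exact hvaln
  have hsub : (⟨p.getVert (m+1+(n-(m+1))), hcw⟩ : ↥(Xᶜ : Set V)) = ⟨w, hwcm⟩ :=
    Subtype.ext hvalend
  rw [hsub] at hw2
  -- hw2 : mk ⟨w, hwcm⟩ = mk ⟨getVert (m+1), hc1⟩
  have hoy : Odd ((G.induce Xᶜ).connectedComponentMk ⟨p.getVert (m+1), hc1⟩).supp.ncard := by
    rw [← hw2]; exact hwo
  have hkey := StmtAux.mk_inl_eq_mk_inr hM hB hmX hc1 hoy hMm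
  refine ⟨p.getVert m, StmtAux.getVert_mem_support p m, hmX, Or.inl ⟨hmX, ?_⟩⟩
  rw [SimpleGraph.ConnectedComponent.mem_supp_iff, hkey]
  have hsub2 : (⟨(G.induce Xᶜ).connectedComponentMk ⟨p.getVert (m+1), hc1⟩, hoy⟩ : OddCompT G X)
      = ⟨(G.induce Xᶜ).connectedComponentMk ⟨w, hwcm⟩, hwo⟩ := Subtype.ext hw2.symm
  rw [hsub2]
  exact (SimpleGraph.ConnectedComponent.mem_supp_iff _ _).1 hwsupp
end

section
/- Let G be a factorizable graph, M a perfect matching of G, H a factor-component of G, and S ∈ P_G(H). Then for any x ∈ V↑*(S), there is an M-balanced path from x to some vertex y ∈ S all of whose vertices except y are contained in V↑(S). -/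
open SimpleGraph

section AuxLemmas

def MSet {W : Type*} (F : Set (Sym2 W)) : Prop :=
  ∀ e ∈ F, ∀ e' ∈ F, ∀ w : W, w ∈ e → w ∈ e' → e = e'

def Cov {W : Type*} (F : Set (Sym2 W)) (w : W) : Prop := ∃ e ∈ F, w ∈ e

lemma core {W : Type*} (H : SimpleGraph W) :
    ∀ (n : ℕ) (M₁ M₂ : Set (Sym2 W)) (u v : W),
      M₁.Finite → M₁.ncard ≤ n →
      M₁ ⊆ H.edgeSet → M₂ ⊆ H.edgeSet →
      MSet M₁ → MSet M₂ →
      u ≠ v → Cov M₁ u → ¬ Cov M₂ u → ¬ Cov M₁ v →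
      (∀ w : W, w ≠ u → w ≠ v → (Cov M₁ w ↔ Cov M₂ w)) →
      ∃ p : H.Walk u v, p.IsPath ∧ Even p.length ∧ IsAltList M₁ p.edges ∧
        ∀ z ∈ p.support, z ≠ v → Cov M₁ z := by
  intro n
  induction n with
  | zero =>
    intro M₁ M₂ u v hfin hle _ _ _ _ _ hcovu _ _ _
    exfalso
    obtain ⟨e, he, -⟩ := hcovu
    have : M₁.ncard = 0 := Nat.le_zero.mp hle
    rw [Set.ncard_eq_zero hfin] at this
    exact absurd he (this ▸ Set.notMem_empty e)
  | succ n IH =>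
    intro M₁ M₂ u v hfin hle hs1 hs2 hm1 hm2 huv hcovu hncov2u hncov1v hiff
    obtain ⟨e, heM, hue⟩ := hcovu
    obtain ⟨u₁, rfl⟩ := Sym2.mem_iff_exists.mp hue
    have hadj1 : H.Adj u u₁ := hs1 heM
    have huu1 : u ≠ u₁ := hadj1.ne
    have hu1v : u₁ ≠ v := by
      rintro rfl
      exact hncov1v ⟨_, heM, Sym2.mem_mk_right _ _⟩
    have hcov2u1 : Cov M₂ u₁ :=
      (hiff u₁ (Ne.symm huu1) hu1v).mp ⟨_, heM, Sym2.mem_mk_right _ _⟩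
    obtain ⟨e₂, he₂M, hu1e₂⟩ := hcov2u1
    obtain ⟨u₂, rfl⟩ := Sym2.mem_iff_exists.mp hu1e₂
    have hadj2 : H.Adj u₁ u₂ := hs2 he₂M
    have hu2u : u₂ ≠ u := by
      rintro rfl
      exact hncov2u ⟨_, he₂M, Sym2.mem_mk_right _ _⟩
    have hu2u1 : u₂ ≠ u₁ := hadj2.ne'
    -- uniqueness helpers
    have huniq1u : ∀ f ∈ M₁, u ∈ f → f = s(u, u₁) :=
      fun f hf huf => hm1 f hf _ heM u huf (Sym2.mem_mk_left _ _)
    have huniq1u1 : ∀ f ∈ M₁, u₁ ∈ f → f = s(u, u₁) :=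
      fun f hf huf => hm1 f hf _ heM u₁ huf (Sym2.mem_mk_right _ _)
    have huniq2u1 : ∀ f ∈ M₂, u₁ ∈ f → f = s(u₁, u₂) :=
      fun f hf huf => hm2 f hf _ he₂M u₁ huf (Sym2.mem_mk_left _ _)
    have huniq2u2 : ∀ f ∈ M₂, u₂ ∈ f → f = s(u₁, u₂) :=
      fun f hf huf => hm2 f hf _ he₂M u₂ huf (Sym2.mem_mk_right _ _)
    have hsu1M1 : s(u₁, u₂) ∉ M₁ := by
      intro hmem
      have := huniq1u1 _ hmem (Sym2.mem_mk_left _ _)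
      rw [Sym2.eq_iff] at this
      rcases this with ⟨h1, h2⟩ | ⟨h1, h2⟩
      · exact hu2u1 h2
      · exact hu2u h2
    by_cases hc : u₂ = v
    · subst hc
      refine ⟨Walk.cons hadj1 (Walk.cons hadj2 Walk.nil), ?_, ?_, ?_, ?_⟩
      · simp [Walk.isPath_def, huu1, huv, hu1v]
      · simp only [Walk.length_cons, Walk.length_nil]
        decide
      · intro i h
        simp only [Walk.edges_cons, Walk.edges_nil, List.length_cons,
          List.length_nil] at h ⊢
        interval_cases i
        · simpa using heM
        · simpa using fun hmem => (hsu1M1 hmem).elim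
      · intro z hz hzv
        simp [Walk.support_cons] at hz
        rcases hz with rfl | rfl | rfl
        · exact ⟨_, heM, Sym2.mem_mk_left _ _⟩
        · exact ⟨_, heM, Sym2.mem_mk_right _ _⟩
        · exact absurd rfl hzv
    · -- recursive case
      set M₁' := M₁ \ {s(u, u₁)} with hM₁'
      set M₂' := M₂ \ {s(u₁, u₂)} with hM₂'
      have hsub1' : M₁' ⊆ M₁ := Set.diff_subset
      have hsub2' : M₂' ⊆ M₂ := Set.diff_subset
      have hcard : M₁'.ncard ≤ n := by
        have := Set.ncard_diff_singleton_lt_of_mem heM hfin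
        rw [← hM₁'] at this
        omega
      have hcov1u2 : Cov M₁ u₂ := by
        refine (hiff u₂ hu2u hc).mpr ⟨_, he₂M, Sym2.mem_mk_right _ _⟩
      obtain ⟨f, hfM, hu2f⟩ := hcov1u2
      have hfne : f ≠ s(u, u₁) := by
        rintro rfl
        rw [Sym2.mem_iff] at hu2f
        rcases hu2f with rfl | rfl
        · exact hu2u rfl
        · exact hu2u1 rfl
      have hncov1'u : ¬ Cov M₁' u := by
        rintro ⟨g, hg, hug⟩
        exact hg.2 (huniq1u g hg.1 hug)
      have hncov1'u1 : ¬ Cov M₁' u₁ := by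
        rintro ⟨g, hg, hug⟩
        exact hg.2 (huniq1u1 g hg.1 hug)
      have hiffnew : ∀ w : W, w ≠ u₂ → w ≠ v → (Cov (M₁ \ {s(u, u₁)}) w ↔ Cov (M₂ \ {s(u₁, u₂)}) w) := by
        intro w hwu2 hwv
        constructor
        · rintro ⟨g, hg, hwg⟩
          have hwu : w ≠ u := by
            rintro rfl
            exact hg.2 (huniq1u g hg.1 hwg)
          obtain ⟨g', hg', hwg'⟩ := (hiff w hwu hwv).mp ⟨g, hg.1, hwg⟩
          refine ⟨g', ⟨hg', ?_⟩, hwg'⟩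
          intro hgeq
          simp only [Set.mem_singleton_iff] at hgeq
          rw [hgeq, Sym2.mem_iff] at hwg'
          rcases hwg' with rfl | rfl
          · -- w = u₁ : then g = s(u,u₁), contradiction
            exact hg.2 (huniq1u1 g hg.1 hwg)
          · exact hwu2 rfl
        · rintro ⟨g, hg, hwg⟩
          have hwu1 : w ≠ u₁ := by
            rintro rfl
            exact hg.2 (huniq2u1 g hg.1 hwg)
          have hwu : w ≠ u := by
            rintro rfl
            exact hncov2u ⟨g, hg.1, hwg⟩
          obtain ⟨g', hg', hwg'⟩ := (hiff w hwu hwv).mpr ⟨g, hg.1, hwg⟩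
          refine ⟨g', ⟨hg', ?_⟩, hwg'⟩
          intro hgeq
          simp only [Set.mem_singleton_iff] at hgeq
          rw [hgeq, Sym2.mem_iff] at hwg'
          rcases hwg' with rfl | rfl
          · exact hwu rfl
          · exact hwu1 rfl

      obtain ⟨p', hp'path, hp'even, hp'alt, hp'cov⟩ :=
        IH M₁' M₂' u₂ v (hfin.diff (t := {s(u, u₁)})) hcard (hsub1'.trans hs1) (hsub2'.trans hs2)
          (fun a ha b hb => hm1 a (hsub1' ha) b (hsub1' hb))
          (fun a ha b hb => hm2 a (hsub2' ha) b (hsub2' hb))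
          hc
          ⟨f, ⟨hfM, hfne⟩, hu2f⟩
          (by
            rintro ⟨g, hg, hug⟩
            exact hg.2 (huniq2u2 g hg.1 hug))
          (by rintro ⟨g, hg, hvg⟩; exact hncov1v ⟨g, hg.1, hvg⟩)
          hiffnew
      -- build the walk
      have hu_not : u ∉ p'.support := fun h => hncov1'u (hp'cov u h huv)
      have hu1_not : u₁ ∉ p'.support := fun h => hncov1'u1 (hp'cov u₁ h hu1v)
      refine ⟨Walk.cons hadj1 (Walk.cons hadj2 p'), ?_, ?_, ?_, ?_⟩
      · refine Walk.IsPath.cons (Walk.IsPath.cons hp'path hu1_not) ?_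
        simp [Walk.support_cons, huu1, hu_not]
      · simp only [Walk.length_cons]
        rw [Nat.even_add_one, Nat.even_add_one]
        simpa using hp'even
      · intro i h
        simp only [Walk.edges_cons, List.length_cons] at h ⊢
        match i with
        | 0 => simpa using heM
        | 1 => simpa using fun hmem => (hsu1M1 hmem).elim
        | (i + 2) =>
          have h' : i < p'.edges.length := by
            simpa using Nat.lt_of_succ_lt_succ (Nat.lt_of_succ_lt_succ h)
          have hget : (s(u, u₁) :: s(u₁, u₂) :: p'.edges).get ⟨i + 2, h⟩ =
              p'.edges.get ⟨i, h'⟩ := rfl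
          rw [hget]
          have := hp'alt i h'
          have hmemiff : p'.edges.get ⟨i, h'⟩ ∈ M₁ ↔ p'.edges.get ⟨i, h'⟩ ∈ M₁' := by
            constructor
            · intro hm
              refine ⟨hm, ?_⟩
              intro hgeq
              simp only [Set.mem_singleton_iff] at hgeq
              have hmem_edge : p'.edges.get ⟨i, h'⟩ ∈ p'.edges := List.get_mem _ _
              rw [hgeq] at hmem_edge
              exact hu_not (p'.fst_mem_support_of_mem_edges hmem_edge)
            · exact fun hm => hm.1
          have hpar : Even (i + 2) ↔ Even i := by simp [Nat.even_add]
          rw [hpar, hmemiff]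
          exact this
      · intro z hz hzv
        simp only [Walk.support_cons, List.mem_cons] at hz
        rcases hz with rfl | rfl | hz
        · exact ⟨_, heM, Sym2.mem_mk_left _ _⟩
        · exact ⟨_, heM, Sym2.mem_mk_right _ _⟩
        · obtain ⟨g, hg, hzg⟩ := hp'cov z hz hzv
          exact ⟨g, hsub1' hg, hzg⟩


section MoreAux

variable {V : Type*}

lemma allowed_adj_G {G : SimpleGraph V} {a b : V}
    (h : (allowedSubgraph G).Adj a b) : G.Adj a b := by
  simp only [allowedSubgraph, fromEdgeSet_adj, Set.mem_setOf_eq] at h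
  exact (G.mem_edgeSet).mp h.1.1

lemma M_adj_allowed {G : SimpleGraph V} {M : SimpleGraph.Subgraph G}
    (hM : M.IsPerfectMatching) {a b : V} (h : M.Adj a b) :
    (allowedSubgraph G).Adj a b := by
  have hG := M.adj_sub h
  simp only [allowedSubgraph, fromEdgeSet_adj, Set.mem_setOf_eq]
  exact ⟨⟨(G.mem_edgeSet).mpr hG, M, hM, (SimpleGraph.Subgraph.mem_edgeSet).mpr h⟩, hG.ne⟩

/-- The factor-component of a vertex. -/
def fcomp (G : SimpleGraph V) (z : V) : Set V := {w | SameFC G z w}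

lemma mem_fcomp_self (G : SimpleGraph V) (z : V) : z ∈ fcomp G z :=
  SimpleGraph.Reachable.refl z

lemma fcomp_eq_of_mem {G : SimpleGraph V} {z w : V} (h : w ∈ fcomp G z) :
    fcomp G w = fcomp G z := by
  ext t
  exact ⟨fun ht => SimpleGraph.Reachable.trans h ht,
    fun ht => SimpleGraph.Reachable.trans (SimpleGraph.Reachable.symm h) ht⟩

lemma sym2_eq_of_matching {α : Type*} {P : α → α → Prop}
    (hsymm : ∀ a b, P a b → P b a)
    (huniq : ∀ a b c, P a b → P a c → b = c)
    {a b a' b' : α} (h1 : P a b) (h2 : P a' b') {c : α}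
    (hc1 : c ∈ s(a, b)) (hc2 : c ∈ s(a', b')) : s(a, b) = s(a', b') := by
  rw [Sym2.mem_iff] at hc1 hc2
  rcases hc1 with rfl | rfl <;> rcases hc2 with rfl | rfl
  · rw [huniq _ _ _ h1 h2]
  · rw [huniq _ _ _ h1 (hsymm _ _ h2)]
    exact Sym2.eq_swap
  · rw [huniq _ _ _ (hsymm _ _ h1) h2, Sym2.eq_swap]
  · rw [huniq _ _ _ (hsymm _ _ h1) (hsymm _ _ h2), Sym2.eq_swap]

lemma mset_of_rel {α : Type*} {P : α → α → Prop}
    (hsymm : ∀ a b, P a b → P b a)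
    (huniq : ∀ a b c, P a b → P a c → b = c) :
    MSet {e : Sym2 α | ∃ p q, P p q ∧ e = s(p, q)} := by
  rintro e ⟨p, q, hpq, rfl⟩ e' ⟨p', q', hpq', rfl⟩ w hw hw'
  exact sym2_eq_of_matching hsymm huniq hpq hpq' hw hw'

lemma walk_reach_induce {G : SimpleGraph V} {U : Set V}
    (hclosed : ∀ s t, s ∈ U → (allowedSubgraph G).Adj s t → t ∈ U) :
    ∀ {z w : V} (_ : (allowedSubgraph G).Walk z w) (hz : z ∈ U),
      ∃ hw : w ∈ U, (G.induce U).Reachable ⟨z, hz⟩ ⟨w, hw⟩ := by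
  intro z w p
  induction p with
  | nil => exact fun hz => ⟨hz, SimpleGraph.Reachable.refl _⟩
  | @cons a b c h q ih =>
    intro hz
    have ht : b ∈ U := hclosed _ _ hz h
    obtain ⟨hw, hr⟩ := ih ht
    have hGadj : G.Adj a b := allowed_adj_G h
    have hadj : (G.induce U).Adj ⟨a, hz⟩ ⟨b, ht⟩ := hGadj
    exact ⟨hw, hadj.reachable.trans hr⟩

lemma walk_support_closed {G : SimpleGraph V} {U K : Set V} {y : V}
    (hstep : ∀ s t, s ∈ K → s ∈ U → t ∈ U → G.Adj s t → t ∈ K) :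
    ∀ {a : V} (p : G.Walk a y), p.IsPath → a ∈ K →
      (∀ z ∈ p.support, z ≠ y → z ∈ U) →
      ∀ z ∈ p.support, z ≠ y → z ∈ K := by
  intro a p
  induction p with
  | nil =>
    intro _ _ _ z hz hzy
    simp only [SimpleGraph.Walk.support_nil, List.mem_cons, List.not_mem_nil,
      or_false] at hz
    exact absurd hz hzy
  | @cons a b y h q ih =>
    intro hpath haK hU z hz hzy
    have hay : a ≠ y := by
      rintro rfl
      exact ((SimpleGraph.Walk.cons_isPath_iff h q).mp hpath).2 q.end_mem_support
    rcases (by simpa [SimpleGraph.Walk.support_cons] using hz : z = a ∨ z ∈ q.support)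
        with rfl | hzq
    · exact haK
    · by_cases hby : b = y
      · subst hby
        have hq : q = SimpleGraph.Walk.nil :=
          (SimpleGraph.Walk.isPath_iff_eq_nil (p := q)).mp hpath.of_cons
        rw [hq] at hzq
        simp only [SimpleGraph.Walk.support_nil, List.mem_cons, List.not_mem_nil,
          or_false] at hzq
        exact absurd hzq hzy
      · have hbU : b ∈ U := hU b (by simp [SimpleGraph.Walk.support_cons,
          q.start_mem_support]) hby
        have hbK : b ∈ K := hstep a b haK (hU a (SimpleGraph.Walk.start_mem_support _) hay) hbU h
        exact ih hpath.of_cons hbK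
          (fun t ht hty => hU t (by simp [SimpleGraph.Walk.support_cons, ht]) hty) z hzq hzy

lemma contract_adj_some_some {G : SimpleGraph V} {X C : Set V}
    {a b : {v : V // v ∈ X \ C}} :
    (contractSet G X C).Adj (some a) (some b) ↔ a ≠ b ∧ G.Adj a.1 b.1 := by
  simp only [contractSet, SimpleGraph.fromRel_adj]
  constructor
  · rintro ⟨hne, h | h⟩
    · exact ⟨fun hab => hne (by rw [hab]), h⟩
    · exact ⟨fun hab => hne (by rw [hab]), h.symm⟩
  · rintro ⟨hne, h⟩
    exact ⟨fun hs => hne (Option.some_injective _ hs), Or.inl h⟩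

lemma contract_adj_some_none {G : SimpleGraph V} {X C : Set V}
    {a : {v : V // v ∈ X \ C}} :
    (contractSet G X C).Adj (some a) none ↔ ∃ c ∈ C ∩ X, G.Adj a.1 c := by
  simp only [contractSet, SimpleGraph.fromRel_adj]
  constructor
  · rintro ⟨-, h | h⟩
    · exact h
    · exact h.elim
  · rintro h
    exact ⟨by simp, Or.inl h⟩

lemma lift_walk {G : SimpleGraph V} {X C : Set V}
    (hdisj : ∀ v ∈ C, v ∉ X \ C)
    (f : V → Option {v : V // v ∈ X \ C})
    (hf1 : ∀ (v : V) (hv : v ∈ X \ C), f v = some ⟨v, hv⟩)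
    (hf2 : ∀ v : V, v ∉ X \ C → f v = none) :
    ∀ {w₀ w₁ : Option {v : V // v ∈ X \ C}}
      (ph : (contractSet G X C).Walk w₀ w₁), w₁ = none → ph.IsPath →
      ∀ (a : {v : V // v ∈ X \ C}), w₀ = some a →
      ∃ (y : V) (_ : y ∈ C) (p : G.Walk a.1 y),
        p.IsPath ∧
        ph.support = p.support.map f ∧
        ph.edges = p.edges.map (Sym2.map f) ∧
        (∀ z ∈ p.support, z ≠ y → z ∈ X \ C) ∧
        ∃ k, k ∈ X \ C ∧ G.Adj k y ∧ k ∈ p.support := by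
  intro w₀ w₁ ph
  induction ph with
  | nil =>
    intro hend _ a ha
    rw [hend] at ha
    exact absurd ha (by simp)
  | @cons w₀ t w₁ h q ih =>
    intro hend hpath a ha
    subst ha
    subst hend
    cases t with
    | none =>
      have hq : q = SimpleGraph.Walk.nil :=
        (SimpleGraph.Walk.isPath_iff_eq_nil (p := q)).mp hpath.of_cons
      subst hq
      obtain ⟨c, hcCX, hadj⟩ := contract_adj_some_none.mp h
      have hcnX : c ∉ X \ C := hdisj c hcCX.1
      have hane : a.1 ≠ c := fun hac => hcnX (hac ▸ a.2)
      refine ⟨c, hcCX.1, SimpleGraph.Walk.cons hadj SimpleGraph.Walk.nil,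
        ?_, ?_, ?_, ?_, a.1, a.2, hadj, SimpleGraph.Walk.start_mem_support _⟩
      · simp [SimpleGraph.Walk.isPath_def, hane]
      · simp [SimpleGraph.Walk.support_cons, SimpleGraph.Walk.support_nil,
          hf1 a.1 a.2, hf2 c hcnX, Subtype.coe_eta]
      · simp [SimpleGraph.Walk.edges_cons, SimpleGraph.Walk.edges_nil,
          Sym2.map_pair_eq, hf1 a.1 a.2, hf2 c hcnX, Subtype.coe_eta]
      · intro z hz hzc
        simp only [SimpleGraph.Walk.support_cons, SimpleGraph.Walk.support_nil,
          List.mem_cons, List.not_mem_nil, or_false] at hz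
        rcases hz with rfl | rfl
        · exact a.2
        · exact absurd rfl hzc
    | some b =>
      have hGadj : G.Adj a.1 b.1 := (contract_adj_some_some.mp h).2
      obtain ⟨y, hy, p', hp'path, hsupp, hedges, hmem, k, hkD, hkadj, hkmem⟩ :=
        ih rfl hpath.of_cons b rfl
      have hanotin : a.1 ∉ p'.support := by
        intro hain
        have hmm : (some a : Option {v : V // v ∈ X \ C}) ∈ q.support := by
          rw [hsupp]
          have := List.mem_map_of_mem (f := f) hain
          simpa [hf1 a.1 a.2, Subtype.coe_eta] using this
        exact ((SimpleGraph.Walk.cons_isPath_iff h q).mp hpath).2 hmm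
      refine ⟨y, hy, SimpleGraph.Walk.cons hGadj p', ?_, ?_, ?_, ?_,
        k, hkD, hkadj, by simp [SimpleGraph.Walk.support_cons, hkmem]⟩
      · exact SimpleGraph.Walk.IsPath.cons hp'path hanotin
      · simp only [SimpleGraph.Walk.support_cons, List.map_cons,
          hf1 a.1 a.2, hsupp, Subtype.coe_eta]
      · simp only [SimpleGraph.Walk.edges_cons, List.map_cons, Sym2.map_pair_eq,
          hf1 a.1 a.2, hf1 b.1 b.2, hedges, Subtype.coe_eta]
      · intro z hz hzy
        rcases (by simpa [SimpleGraph.Walk.support_cons] using hz :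
            z = a.1 ∨ z ∈ p'.support) with rfl | hzp
        · exact a.2
        · exact hmem z hzp hzy

end MoreAux

end AuxLemmas

theorem stmt10 {V : Type*} [Fintype V] (G : SimpleGraph V)
    (M : SimpleGraph.Subgraph G) (hM : M.IsPerfectMatching)
    (C S : Set V) (hC : IsFactorComponent G C) (hS : IsClassOf G C S)
    (x : V) (hx : x ∈ upStarOfClass G C S) :
    ∃ (y : V) (_ : y ∈ S) (p : G.Walk x y),
      IsBalancedPath M.edgeSet p ∧
      ∀ z ∈ p.support, z ≠ y → z ∈ upOfClass G C S := by
  classical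
  rcases hx with hxUp | hxS
  swap
  · refine ⟨x, hxS, SimpleGraph.Walk.nil, ⟨SimpleGraph.Walk.IsPath.nil, by simp, ?_⟩, ?_⟩
    · intro i h
      simp at h
    · intro z hz hzy
      simp only [SimpleGraph.Walk.support_nil, List.mem_cons, List.not_mem_nil,
        or_false] at hz
      exact absurd hz hzy
  obtain ⟨C', hC'fc, hC'ne, hord, hxC', K, hKcomp, hC'K, hKS⟩ := hxUp
  obtain ⟨X₀, hXsep, hXsub, hXcrit⟩ := hord
  have hCcomp : ∀ z ∈ C, C = fcomp G z := by
    intro z hz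
    obtain ⟨v₁, rfl⟩ := hC
    exact (fcomp_eq_of_mem hz).symm
  have hC'comp : ∀ z ∈ C', C' = fcomp G z := by
    intro z hz
    obtain ⟨v₁, rfl⟩ := hC'fc
    exact (fcomp_eq_of_mem hz).symm
  have hCX₀ : C ⊆ X₀ := (Set.subset_union_left).trans hXsub
  have hxC : x ∉ C := by
    intro hxCmem
    exact hC'ne ((hC'comp x hxC').trans (hCcomp x hxCmem).symm)
  have hxX : x ∈ X₀ := hXsub (Set.mem_union_right _ hxC')
  have hxD : x ∈ X₀ \ C := ⟨hxX, hxC⟩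
  have hfc_notC : ∀ z, z ∉ C → ∀ w ∈ fcomp G z, w ∉ C := by
    intro z hz w hw hwC
    have h2 : fcomp G w = fcomp G z := fcomp_eq_of_mem hw
    have h3 : z ∈ C := by
      rw [hCcomp w hwC, h2]
      exact mem_fcomp_self G z
    exact hz h3
  have hfc_sub : ∀ z ∈ X₀, fcomp G z ⊆ X₀ := by
    intro z hz
    rcases hXsep (fcomp G z) ⟨z, rfl⟩ with h | h
    · exact h
    · exact absurd hz (Set.disjoint_left.mp h (mem_fcomp_self G z))
  have hfc_ord : ∀ z ∈ X₀, compOrder G C (fcomp G z) :=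
    fun z hz => ⟨X₀, hXsep, Set.union_subset hCX₀ (hfc_sub z hz), hXcrit⟩
  set U : Set V := upStar G C \ C with hUdef
  have hfc_up : ∀ z ∈ X₀ \ C, fcomp G z ⊆ U := by
    intro z hz w hw
    exact ⟨⟨fcomp G z, ⟨z, rfl⟩, hfc_ord z hz.1, hw⟩, hfc_notC z hz.2 w hw⟩
  have hUclosed : ∀ s t, s ∈ U → (allowedSubgraph G).Adj s t → t ∈ U := by
    intro s t hsU hadj
    obtain ⟨⟨Cs, hCsfc, hCsord, hsCs⟩, hsC⟩ := hsU
    have hCs : Cs = fcomp G s := by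
      obtain ⟨v₁, rfl⟩ := hCsfc
      exact (fcomp_eq_of_mem hsCs).symm
    have htfc : t ∈ fcomp G s := hadj.reachable
    exact ⟨⟨Cs, hCsfc, hCsord, by rw [hCs]; exact htfc⟩, hfc_notC s hsC t htfc⟩
  obtain ⟨v₀, hv₀U, hKdef⟩ := hKcomp
  have hxK : x ∈ K := hC'K hxC'
  have hKreach : ∀ z ∈ K, ∀ (w : V) (hwU : w ∈ U) (hzU : z ∈ U),
      (G.induce U).Reachable ⟨z, hzU⟩ ⟨w, hwU⟩ → w ∈ K := by
    intro z hzK w hwU hzU hr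
    rw [hKdef] at hzK ⊢
    obtain ⟨hzU', hz⟩ := hzK
    exact ⟨hwU, hz.trans hr⟩
  have hKfcomp : ∀ z ∈ K, z ∈ X₀ \ C → fcomp G z ⊆ K := by
    intro z hzK hzD w hw
    have hzU : z ∈ U := hfc_up z hzD (mem_fcomp_self G z)
    obtain ⟨pw⟩ := (hw : SameFC G z w)
    obtain ⟨hwU, hr⟩ := walk_reach_induce hUclosed pw hzU
    exact hKreach z hzK w hwU hzU hr
  have hMuniq : ∀ {a b c : V}, M.Adj a b → M.Adj a c → b = c := by
    intro a b c h1 h2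
    exact ExistsUnique.unique (hM.1 (hM.2 a)) h1 h2
  have hMall : ∀ {a b : V}, M.Adj a b → SameFC G a b :=
    fun h => (M_adj_allowed hM h).reachable
  set Dsub := {v : V // v ∈ X₀ \ C} with hDsubdef
  set f : V → Option Dsub :=
    fun v => if hv : v ∈ X₀ \ C then some ⟨v, hv⟩ else none with hfdef
  have hf1 : ∀ (v : V) (hv : v ∈ X₀ \ C), f v = some ⟨v, hv⟩ := fun v hv => dif_pos hv
  have hf2 : ∀ v : V, v ∉ X₀ \ C → f v = none := fun v hv => dif_neg hv
  set P₁ : Option Dsub → Option Dsub → Prop :=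
    fun p q => ∃ a b : Dsub, p = some a ∧ q = some b ∧ M.Adj a.1 b.1 with hP₁def
  set M₁ : Set (Sym2 (Option Dsub)) := {e | ∃ p q, P₁ p q ∧ e = s(p, q)} with hM₁def
  have hP₁symm : ∀ p q, P₁ p q → P₁ q p := by
    rintro p q ⟨a, b, hp, hq, hab⟩
    exact ⟨b, a, hq, hp, hab.symm⟩
  have hP₁uniq : ∀ p q r, P₁ p q → P₁ p r → q = r := by
    rintro p q r ⟨a, b, rfl, rfl, hab⟩ ⟨a', b', ha', rfl, hab'⟩
    obtain rfl : a' = a := Option.some_injective _ ha'.symm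
    obtain rfl : b' = b := Subtype.ext (hMuniq hab hab').symm
    rfl
  have hmset1 : MSet M₁ := mset_of_rel hP₁symm hP₁uniq
  set xh : Option Dsub := some ⟨x, hxD⟩ with hxhdef
  obtain ⟨N, hN⟩ := hXcrit xh
  set P₂ : Option Dsub → Option Dsub → Prop :=
    fun p q => ∃ (hp : p ≠ xh) (hq : q ≠ xh), N.Adj ⟨p, hp⟩ ⟨q, hq⟩ with hP₂def
  set M₂ : Set (Sym2 (Option Dsub)) := {e | ∃ p q, P₂ p q ∧ e = s(p, q)} with hM₂def
  have hP₂symm : ∀ p q, P₂ p q → P₂ q p := by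
    rintro p q ⟨hp, hq, hadj⟩
    exact ⟨hq, hp, hadj.symm⟩
  have hP₂uniq : ∀ p q r, P₂ p q → P₂ p r → q = r := by
    rintro p q r ⟨hp, hq, hadj⟩ ⟨hp', hr, hadj'⟩
    have := ExistsUnique.unique (hN.1 (hN.2 ⟨p, hp⟩)) hadj hadj'
    exact congrArg Subtype.val this
  have hmset2 : MSet M₂ := mset_of_rel hP₂symm hP₂uniq
  have hM₁sub : M₁ ⊆ (contractSet G X₀ C).edgeSet := by
    rintro e ⟨p, q, ⟨a, b, rfl, rfl, hab⟩, rfl⟩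
    have hGab := M.adj_sub hab
    exact ((contractSet G X₀ C).mem_edgeSet).mpr
      (contract_adj_some_some.mpr ⟨fun h => hGab.ne (congrArg Subtype.val h), hGab⟩)
  have hM₂sub : M₂ ⊆ (contractSet G X₀ C).edgeSet := by
    rintro e ⟨p, q, ⟨hp, hq, hadj⟩, rfl⟩
    exact ((contractSet G X₀ C).mem_edgeSet).mpr (N.adj_sub hadj)
  have hcovM1 : ∀ a : Dsub, Cov M₁ (some a) := by
    intro a
    obtain ⟨b, hab, -⟩ := hM.1 (hM.2 a.1)
    have hbfc : b ∈ fcomp G a.1 := hMall hab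
    have hbD : b ∈ X₀ \ C := ⟨hfc_sub a.1 a.2.1 hbfc, hfc_notC a.1 a.2.2 b hbfc⟩
    exact ⟨s(some a, some ⟨b, hbD⟩),
      ⟨some a, some ⟨b, hbD⟩, ⟨a, ⟨b, hbD⟩, rfl, rfl, hab⟩, rfl⟩, Sym2.mem_mk_left _ _⟩
  have hnc1none : ¬ Cov M₁ none := by
    rintro ⟨e, ⟨p, q, ⟨a, b, rfl, rfl, -⟩, rfl⟩, hmem⟩
    simp [Sym2.mem_iff] at hmem
  have hnc2xh : ¬ Cov M₂ xh := by
    rintro ⟨e, ⟨p, q, ⟨hp, hq, -⟩, rfl⟩, hmem⟩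
    rw [Sym2.mem_iff] at hmem
    rcases hmem with rfl | rfl
    · exact hp rfl
    · exact hq rfl
  have hcovM2 : ∀ w : Option Dsub, w ≠ xh → Cov M₂ w := by
    intro w hw
    obtain ⟨q, hq, -⟩ := hN.1 (hN.2 ⟨w, hw⟩)
    exact ⟨s(w, q.1), ⟨w, q.1, ⟨hw, q.2, hq⟩, rfl⟩, Sym2.mem_mk_left _ _⟩
  have hiffcore : ∀ w : Option Dsub, w ≠ xh → w ≠ none → (Cov M₁ w ↔ Cov M₂ w) := by
    intro w hwx hwnone
    match w with
    | none => exact absurd rfl hwnone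
    | some a => exact iff_of_true (hcovM1 a) (hcovM2 _ hwx)
  obtain ⟨ph, hphpath, hpheven, hphalt, hphcov⟩ :=
    core (contractSet G X₀ C) M₁.ncard M₁ M₂ xh none (Set.toFinite M₁) le_rfl
      hM₁sub hM₂sub hmset1 hmset2 (by simp [hxhdef]) (hcovM1 ⟨x, hxD⟩) hnc2xh hnc1none
      (fun w hw hw' => hiffcore w hw hw')
  have hdisjCD : ∀ v ∈ C, v ∉ X₀ \ C := fun v hv hvD => hvD.2 hv
  obtain ⟨y, hyC, p, hppath, hsupp, hedges, hmemD, k, hkD, hkadj, hkmem⟩ :=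
    lift_walk hdisjCD f hf1 hf2 ph rfl hphpath ⟨x, hxD⟩ rfl
  have hedge_iff : ∀ z z' : V, s(z, z') ∈ p.edges →
      (s(z, z') ∈ M.edgeSet ↔ Sym2.map f s(z, z') ∈ M₁) := by
    intro z z' he
    have hzadj : G.Adj z z' := p.edges_subset_edgeSet he
    have hzs : z ∈ p.support := p.fst_mem_support_of_mem_edges he
    have hz's : z' ∈ p.support := p.snd_mem_support_of_mem_edges he
    by_cases hzy : z = y <;> by_cases hz'y : z' = y
    · exact absurd (hzy.trans hz'y.symm) hzadj.ne
    · subst hzy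
      have hz'D := hmemD z' hz's hz'y
      refine iff_of_false ?_ ?_
      · intro hmm
        have hfc : z' ∈ fcomp G z := hMall ((SimpleGraph.Subgraph.mem_edgeSet).mp hmm)
        exact hz'D.2 (by rw [hCcomp z hyC]; exact hfc)
      · intro hmm
        refine hnc1none ⟨_, hmm, ?_⟩
        rw [Sym2.map_pair_eq, hf2 z (hdisjCD z hyC)]
        exact Sym2.mem_mk_left _ _
    · subst hz'y
      have hzD := hmemD z hzs hzy
      refine iff_of_false ?_ ?_
      · intro hmm
        have hfc : z ∈ fcomp G z' :=
          (hMall ((SimpleGraph.Subgraph.mem_edgeSet).mp hmm)).symm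
        exact hzD.2 (by rw [hCcomp z' hyC]; exact hfc)
      · intro hmm
        refine hnc1none ⟨_, hmm, ?_⟩
        rw [Sym2.map_pair_eq, hf2 z' (hdisjCD z' hyC)]
        exact Sym2.mem_mk_right _ _
    · have hzD := hmemD z hzs hzy
      have hz'D := hmemD z' hz's hz'y
      rw [Sym2.map_pair_eq, hf1 z hzD, hf1 z' hz'D]
      constructor
      · intro hmm
        exact ⟨some ⟨z, hzD⟩, some ⟨z', hz'D⟩,
          ⟨⟨z, hzD⟩, ⟨z', hz'D⟩, rfl, rfl, (SimpleGraph.Subgraph.mem_edgeSet).mp hmm⟩, rfl⟩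
      · rintro ⟨pp, qq, ⟨a, b, rfl, rfl, hab⟩, heq⟩
        rw [Sym2.eq_iff] at heq
        rcases heq with ⟨h1, h2⟩ | ⟨h1, h2⟩
        · obtain rfl : a = ⟨z, hzD⟩ := (Option.some_injective _ h1).symm
          obtain rfl : b = ⟨z', hz'D⟩ := (Option.some_injective _ h2).symm
          exact (SimpleGraph.Subgraph.mem_edgeSet).mpr hab
        · obtain rfl : b = ⟨z, hzD⟩ := (Option.some_injective _ h1).symm
          obtain rfl : a = ⟨z', hz'D⟩ := (Option.some_injective _ h2).symm
          exact (SimpleGraph.Subgraph.mem_edgeSet).mpr hab.symm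
  have hedge_iff' : ∀ e ∈ p.edges, (e ∈ M.edgeSet ↔ Sym2.map f e ∈ M₁) := by
    intro e
    induction e using Sym2.ind with
    | _ z z' => exact hedge_iff z z'
  have hlen : ph.length = p.length := by
    rw [← SimpleGraph.Walk.length_edges, ← SimpleGraph.Walk.length_edges, hedges,
      List.length_map]
  have haltM : IsAltList M.edgeSet p.edges := by
    intro i h
    have hh : i < ph.edges.length := by
      rw [hedges, List.length_map]; exact h
    have hgot := hphalt i hh
    have hget : ph.edges.get ⟨i, hh⟩ = Sym2.map f (p.edges.get ⟨i, h⟩) := by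
      simp [hedges, List.get_eq_getElem, List.getElem_map]
    rw [hget] at hgot
    rw [hedge_iff' _ (List.get_mem _ _)]
    exact hgot
  have hpeven : Even p.length := hlen ▸ hpheven
  have hsuppU : ∀ z ∈ p.support, z ≠ y → z ∈ U :=
    fun z hz hzy => hfc_up z (hmemD z hz hzy) (mem_fcomp_self G z)
  have hstep : ∀ s t, s ∈ K → s ∈ U → t ∈ U → G.Adj s t → t ∈ K := by
    intro s t hsK hsU htU hadj
    have hadj' : (G.induce U).Adj ⟨s, hsU⟩ ⟨t, htU⟩ := hadj
    exact hKreach s hsK t htU hsU hadj'.reachable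
  have hsuppK : ∀ z ∈ p.support, z ≠ y → z ∈ K :=
    walk_support_closed hstep p hppath hxK hsuppU
  have hkK : k ∈ K := hsuppK k hkmem (fun h => (h ▸ hkD).2 hyC)
  have hyS : y ∈ S := hKS y hyC ⟨k, hkK, hkadj⟩
  refine ⟨y, hyS, p, ⟨hppath, hpeven, haltM⟩, ?_⟩
  intro z hz hzy
  have hzD := hmemD z hz hzy
  have hzK := hsuppK z hz hzy
  exact ⟨fcomp G z, ⟨z, rfl⟩, fun h => hzD.2 (h ▸ mem_fcomp_self G z),
    hfc_ord z hzD.1, mem_fcomp_self G z, K, ⟨v₀, hv₀U, hKdef⟩,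
    hKfcomp z hzK hzD, hKS⟩
end
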